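/- arXiv:1807.09139 — 3 statements merged into one kernel-verified Lean document; each statement's English description precedes it below -/
import Mathlib

section
/- Let n ≥ i+j and let f = c · ∏_{k=1}^{i} g_k · ∏_{k=1}^{n-i-j} h_k · ∏_{k=1}^{j-i} v_k be a tensor product where c ≠ 0 is a constant, each g_k is a function a₁(s,t) on Σ_q² (value 1 when x=s,y≠t; −1 when y=t,x≠s; 0 otherwise), each h_k is the constant function 1 on Σ_q, and each v_k is an indicator a₄(m) of a point of Σ_q. Then f ∈ U_{[i,j]}(n,q) and the support of f has cardinality exactly 2^i (q-1)^i q^{n-i-j}. -/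
/-- Sum of `f` over the neighbors of `x` in the Hamming graph `H(n,q)`. -/
noncomputable def adjSum (n q : ℕ) (f : (Fin n → Fin q) → ℝ) (x : Fin n → Fin q) : ℝ :=
  ∑ y : Fin n → Fin q, if hammingDist x y = 1 then f y else 0

/-- `f` satisfies the eigenfunction equation for eigenvalue `lam` on `H(n,q)`. -/
def IsEigenfun (n q : ℕ) (lam : ℝ) (f : (Fin n → Fin q) → ℝ) : Prop :=
  ∀ x, adjSum n q f x = lam * f x

/-- `f ∈ U_i(n,q)`, the eigenspace for eigenvalue `n(q-1) - q i`. -/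
def memU (n q i : ℕ) (f : (Fin n → Fin q) → ℝ) : Prop :=
  IsEigenfun n q ((n : ℝ) * ((q : ℝ) - 1) - (q : ℝ) * (i : ℝ)) f

/-- `f ∈ U_{[i,j]}(n,q) = U_i ⊕ ⋯ ⊕ U_j`. -/
def memUI (n q i j : ℕ) (f : (Fin n → Fin q) → ℝ) : Prop :=
  ∃ g : ℕ → (Fin n → Fin q) → ℝ,
    (∀ t ∈ Finset.Icc i j, memU n q t (g t)) ∧ f = ∑ t ∈ Finset.Icc i j, g t

/-- The cardinality of the support of `f : Σ_q^n → ℝ`. -/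
noncomputable def suppCard (n q : ℕ) (f : (Fin n → Fin q) → ℝ) : ℕ :=
  Nat.card {x : Fin n → Fin q // f x ≠ 0}


lemma hammingDist_eq_card {n q : ℕ} (x y : Fin n → Fin q) :
    hammingDist x y = (Finset.univ.filter fun i => x i ≠ y i).card := rfl

lemma hamming_update {n q : ℕ} (x : Fin n → Fin q) (k : Fin n) (b : Fin q) (hb : b ≠ x k) :
    hammingDist x (Function.update x k b) = 1 := by
  rw [hammingDist_eq_card]
  have h : (Finset.univ.filter fun i => x i ≠ Function.update x k b i) = {k} := by
    ext m
    by_cases hm : m = k <;> simp [Function.update, hm, Ne.symm hb]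
  rw [h]; simp

lemma per_y {n q : ℕ} (x y : Fin n → Fin q) (F : (Fin n → Fin q) → ℝ) :
    (∑ k : Fin n, ∑ b : Fin q,
        if b ≠ x k ∧ y = Function.update x k b then F y else 0)
      = if hammingDist x y = 1 then F y else 0 := by
  by_cases h : hammingDist x y = 1
  · rw [hammingDist_eq_card] at h
    obtain ⟨k₀, hk₀⟩ := Finset.card_eq_one.mp h
    have hx : x k₀ ≠ y k₀ := by
      have : k₀ ∈ (Finset.univ.filter fun i => x i ≠ y i) := by rw [hk₀]; simp
      simpa using this
    have hagree : ∀ m, m ≠ k₀ → x m = y m := by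
      intro m hm
      by_contra hne
      have : m ∈ (Finset.univ.filter fun i => x i ≠ y i) := by simp [hne]
      rw [hk₀] at this
      exact hm (Finset.mem_singleton.mp this)
    have hupd : Function.update x k₀ (y k₀) = y := by
      funext m
      by_cases hm : m = k₀
      · subst hm; simp
      · rw [Function.update_of_ne hm]; exact hagree m hm
    rw [if_pos (by rw [hammingDist_eq_card]; exact h)]
    rw [Finset.sum_eq_single k₀]
    · rw [Finset.sum_eq_single (y k₀)]
      · rw [if_pos ⟨Ne.symm hx, hupd.symm⟩]
      · intro b _ hbne
        rw [if_neg]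
        rintro ⟨h1, h2⟩
        apply hbne
        rw [h2]; simp
      · simp
    · intro k _ hk
      apply Finset.sum_eq_zero; intro b _
      rw [if_neg]
      rintro ⟨h1, h2⟩
      exact hx (by rw [h2, Function.update_of_ne (Ne.symm hk)])
    · simp
  · rw [if_neg h]
    apply Finset.sum_eq_zero; intro k _
    apply Finset.sum_eq_zero; intro b _
    rw [if_neg]
    rintro ⟨h1, h2⟩
    exact h (h2 ▸ hamming_update x k b h1)

lemma sum_dist_one {n q : ℕ} (x : Fin n → Fin q) (F : (Fin n → Fin q) → ℝ) :
    (∑ y : Fin n → Fin q, if hammingDist x y = 1 then F y else 0)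
      = ∑ k : Fin n, ∑ b : Fin q, if b ≠ x k then F (Function.update x k b) else 0 := by
  have step : ∀ k : Fin n, ∀ b : Fin q,
      (if b ≠ x k then F (Function.update x k b) else 0)
        = ∑ y : Fin n → Fin q, if b ≠ x k ∧ y = Function.update x k b then F y else 0 := by
    intro k b
    by_cases hb : b ≠ x k
    · simp [hb, Finset.sum_ite_eq']
    · simp [hb]
  simp only [step]
  symm
  calc (∑ k : Fin n, ∑ b : Fin q, ∑ y : Fin n → Fin q,
      if b ≠ x k ∧ y = Function.update x k b then F y else 0)
      = ∑ k : Fin n, ∑ y : Fin n → Fin q, ∑ b : Fin q,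
        if b ≠ x k ∧ y = Function.update x k b then F y else 0 :=
        Finset.sum_congr rfl fun k _ => by rw [Finset.sum_comm]
    _ = ∑ y : Fin n → Fin q, ∑ k : Fin n, ∑ b : Fin q,
        if b ≠ x k ∧ y = Function.update x k b then F y else 0 := by rw [Finset.sum_comm]
    _ = ∑ y : Fin n → Fin q, if hammingDist x y = 1 then F y else 0 := by simp only [per_y]


lemma key_eigen {n q : ℕ} (φ : Fin n → Fin q → ℝ) (μ : Fin n → ℝ)
    (h : ∀ k (a : Fin q), (∑ b : Fin q, if b ≠ a then φ k b else 0) = μ k * φ k a) :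
    IsEigenfun n q (∑ k, μ k) (fun x => ∏ m, φ m (x m)) := by
  intro x
  unfold adjSum
  rw [sum_dist_one]
  have hprod : ∀ (k : Fin n) (b : Fin q),
      (∏ m, φ m (Function.update x k b m))
        = φ k b * ∏ m ∈ Finset.univ.erase k, φ m (x m) := by
    intro k b
    rw [← Finset.mul_prod_erase Finset.univ _ (Finset.mem_univ k)]
    congr 1
    · simp
    · exact Finset.prod_congr rfl fun m hm => by
        rw [Function.update_of_ne (Finset.ne_of_mem_erase hm)]
  have hstep : ∀ k : Fin n,
      (∑ b : Fin q, if b ≠ x k then (∏ m, φ m (Function.update x k b m)) else 0)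
        = μ k * ∏ m, φ m (x m) := by
    intro k
    have h2 : ∀ b, (if b ≠ x k then (∏ m, φ m (Function.update x k b m)) else 0)
        = (if b ≠ x k then φ k b else 0) * ∏ m ∈ Finset.univ.erase k, φ m (x m) := by
      intro b; by_cases hb : b ≠ x k <;> simp [hb, hprod]
    simp only [h2]
    rw [← Finset.sum_mul, h k (x k), mul_assoc]
    congr 1
    exact Finset.mul_prod_erase Finset.univ (fun m => φ m (x m)) (Finset.mem_univ k)
  simp only [hstep]
  rw [← Finset.sum_mul]

lemma eig_sum {n q : ℕ} {ι : Type*} (S : Finset ι) (lam : ℝ) (F : ι → (Fin n → Fin q) → ℝ)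
    (h : ∀ a ∈ S, IsEigenfun n q lam (F a)) :
    IsEigenfun n q lam (fun x => ∑ a ∈ S, F a x) := by
  intro x
  unfold adjSum
  calc (∑ y : Fin n → Fin q, if hammingDist x y = 1 then ∑ a ∈ S, F a y else 0)
      = ∑ y : Fin n → Fin q, ∑ a ∈ S, (if hammingDist x y = 1 then F a y else 0) := by
        refine Finset.sum_congr rfl fun y _ => ?_
        split <;> simp
    _ = ∑ a ∈ S, ∑ y : Fin n → Fin q, (if hammingDist x y = 1 then F a y else 0) := by
        rw [Finset.sum_comm]
    _ = ∑ a ∈ S, lam * F a x := Finset.sum_congr rfl fun a ha => h a ha x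
    _ = lam * ∑ a ∈ S, F a x := by rw [Finset.mul_sum]

lemma eig_const_mul {n q : ℕ} (c lam : ℝ) (f : (Fin n → Fin q) → ℝ)
    (h : IsEigenfun n q lam f) : IsEigenfun n q lam (fun x => c * f x) := by
  intro x
  unfold adjSum
  calc (∑ y : Fin n → Fin q, if hammingDist x y = 1 then c * f y else 0)
      = c * ∑ y : Fin n → Fin q, (if hammingDist x y = 1 then f y else 0) := by
        rw [Finset.mul_sum]
        refine Finset.sum_congr rfl fun y _ => ?_
        split <;> simp
    _ = c * (lam * f x) := by
        have hh := h x; unfold adjSum at hh; rw [hh]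
    _ = lam * (c * f x) := by ring

noncomputable def Dl (q : ℕ) (m a : Fin q) : ℝ := (if a = m then 1 else 0) - 1/q

lemma coord_const {q : ℕ} (c : ℝ) (a : Fin q) :
    (∑ b : Fin q, if b ≠ a then c else 0) = ((q : ℝ) - 1) * c := by
  have hq : 0 < q := a.pos
  rw [Finset.sum_ite, Finset.sum_const, Finset.sum_const]
  have : (Finset.univ.filter fun b : Fin q => b ≠ a) = Finset.univ.erase a := by
    ext b; simp [Finset.mem_erase, and_comm]
  rw [this, Finset.card_erase_of_mem (Finset.mem_univ a)]
  simp only [Finset.card_univ, Fintype.card_fin, smul_zero, add_zero, nsmul_eq_mul]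
  rw [Nat.cast_sub hq]
  norm_num

lemma coord_D {q : ℕ} (m a : Fin q) :
    (∑ b : Fin q, if b ≠ a then Dl q m b else 0) = (-1) * Dl q m a := by
  have hq : 0 < q := a.pos
  have hq' : (q : ℝ) ≠ 0 := by positivity
  unfold Dl
  have h2 : ∀ b : Fin q, (if b ≠ a then ((if b = m then (1:ℝ) else 0) - 1/q) else 0)
      = (if b ≠ a then (if b = m then (1:ℝ) else 0) else 0)
        - (if b ≠ a then (1/q : ℝ) else 0) := by
    intro b; split <;> simp
  simp only [h2]
  rw [Finset.sum_sub_distrib, coord_const (1/q : ℝ) a]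
  have h3 : (∑ b : Fin q, if b ≠ a then (if b = m then (1:ℝ) else 0) else 0)
      = if m = a then 0 else 1 := by
    have h4 : ∀ b : Fin q, (if b ≠ a then (if b = m then (1:ℝ) else 0) else 0)
        = if b = m then (if m = a then 0 else 1) else 0 := by
      intro b
      by_cases hbm : b = m <;> by_cases hba : b = a <;> simp_all
    simp only [h4]
    rw [Finset.sum_ite_eq' Finset.univ m]
    simp
  rw [h3]
  by_cases hma : m = a
  · subst hma
    simp only [if_pos rfl]
    field_simp
    simp only [↓reduceIte]
    ring
  · simp only [if_neg hma, if_neg (Ne.symm hma)]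
    field_simp
    ring

def emap (n i j : ℕ) (hij : i ≤ j) (hn : i + j ≤ n) :
    (Fin i × Fin 2) ⊕ (Fin (n - i - j) ⊕ Fin (j - i)) → Fin n
  | .inl (k, b) => ⟨2 * k.1 + b.1, by have hk := k.2; have hb := b.2; omega⟩
  | .inr (.inl k) => ⟨2 * i + k.1, by have hk := k.2; omega⟩
  | .inr (.inr k) => ⟨2 * i + (n - i - j) + k.1, by omega⟩

def dmap (n i j : ℕ) (hij : i ≤ j) (hn : i + j ≤ n) :
    Fin n → (Fin i × Fin 2) ⊕ (Fin (n - i - j) ⊕ Fin (j - i)) := fun m =>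
  if h1 : m.1 < 2 * i then .inl (⟨m.1 / 2, by omega⟩, ⟨m.1 % 2, by omega⟩)
  else if h2 : m.1 < 2 * i + (n - i - j) then .inr (.inl ⟨m.1 - 2 * i, by omega⟩)
  else .inr (.inr ⟨m.1 - (2 * i + (n - i - j)), by have := m.2; omega⟩)

def eqv (n i j : ℕ) (hij : i ≤ j) (hn : i + j ≤ n) :
    ((Fin i × Fin 2) ⊕ (Fin (n - i - j) ⊕ Fin (j - i))) ≃ Fin n where
  toFun := emap n i j hij hn
  invFun := dmap n i j hij hn
  left_inv := by
    rintro (⟨k, b⟩ | k | k)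
    · have hk := k.2; have hb := b.2
      simp only [emap, dmap]
      simp only [show 2 * k.1 + b.1 < 2 * i from by omega, ↓reduceDIte]
      simp only [Sum.inl.injEq, Prod.ext_iff, Fin.ext_iff]
      constructor <;> omega
    · have hk := k.2
      simp only [emap, dmap]
      simp only [show ¬(2 * i + k.1 < 2 * i) from by omega,
        show 2 * i + k.1 < 2 * i + (n - i - j) from by omega, ↓reduceDIte]
      simp only [Sum.inr.injEq, Sum.inl.injEq, Fin.ext_iff]
      omega
    · have hk := k.2
      simp only [emap, dmap]
      simp only [show ¬(2 * i + (n - i - j) + k.1 < 2 * i) from by omega,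
        show ¬(2 * i + (n - i - j) + k.1 < 2 * i + (n - i - j)) from by omega, ↓reduceDIte]
      simp only [Sum.inr.injEq, Fin.ext_iff]
      omega
  right_inv := by
    intro m
    have hm := m.2
    unfold dmap
    split_ifs with h1 h2 <;> simp only [emap, Fin.ext_iff] <;> omega

lemma eqv_inl (n i j : ℕ) (hij : i ≤ j) (hn : i + j ≤ n) (k : Fin i) (b : Fin 2) :
    eqv n i j hij hn (.inl (k, b)) = ⟨2 * k.1 + b.1, by have := k.2; have := b.2; omega⟩ := rfl

lemma eqv_mid (n i j : ℕ) (hij : i ≤ j) (hn : i + j ≤ n) (k : Fin (n - i - j)) :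
    eqv n i j hij hn (.inr (.inl k)) = ⟨2 * i + k.1, by have := k.2; omega⟩ := rfl

lemma eqv_tail (n i j : ℕ) (hij : i ≤ j) (hn : i + j ≤ n) (k : Fin (j - i)) :
    eqv n i j hij hn (.inr (.inr k)) = ⟨2 * i + (n - i - j) + k.1, by omega⟩ := rfl


section PhiMu
variable (n q i j : ℕ) (s t : Fin i → Fin q) (ms : Fin (j - i) → Fin q)
variable (S' : Finset (Fin i)) (S : Finset (Fin (j - i)))

noncomputable def phi : Fin n → Fin q → ℝ := fun m a =>
  if h1 : m.1 < 2 * i then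
    (if m.1 % 2 = 0 then
      (if (⟨m.1 / 2, by omega⟩ : Fin i) ∈ S' then Dl q (s ⟨m.1 / 2, by omega⟩) a else 1)
     else
      (if (⟨m.1 / 2, by omega⟩ : Fin i) ∈ S' then 1 else -(Dl q (t ⟨m.1 / 2, by omega⟩) a)))
  else if m.1 < 2 * i + (n - i - j) then 1
  else if h3 : m.1 - (2 * i + (n - i - j)) < j - i then
    (if (⟨m.1 - (2 * i + (n - i - j)), h3⟩ : Fin (j - i)) ∈ S then
      Dl q (ms ⟨m.1 - (2 * i + (n - i - j)), h3⟩) a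
     else 1 / q)
  else 1

noncomputable def mus : Fin n → ℝ := fun m =>
  if h1 : m.1 < 2 * i then
    (if m.1 % 2 = 0 then (if (⟨m.1 / 2, by omega⟩ : Fin i) ∈ S' then (-1 : ℝ) else (q : ℝ) - 1)
     else (if (⟨m.1 / 2, by omega⟩ : Fin i) ∈ S' then (q : ℝ) - 1 else -1))
  else if m.1 < 2 * i + (n - i - j) then (q : ℝ) - 1
  else if h3 : m.1 - (2 * i + (n - i - j)) < j - i then
    (if (⟨m.1 - (2 * i + (n - i - j)), h3⟩ : Fin (j - i)) ∈ S then (-1 : ℝ) else (q : ℝ) - 1)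
  else (q : ℝ) - 1

variable {n i j}

lemma phi_pair0 (k : Fin i) (pf : 2 * k.1 < n) (a : Fin q) :
    phi n q i j s t ms S' S ⟨2 * k.1, pf⟩ a = (if k ∈ S' then Dl q (s k) a else 1) := by
  have hk := k.2
  unfold phi
  rw [dif_pos (by show 2 * k.1 < 2 * i; omega), if_pos (by show 2 * k.1 % 2 = 0; omega)]
  have h : ∀ pf2 : (2 * k.1) / 2 < i, (⟨(2 * k.1) / 2, pf2⟩ : Fin i) = k := by
    intro pf2; ext; show (2 * k.1) / 2 = k.1; omega
  rw [h]

lemma phi_pair1 (k : Fin i) (pf : 2 * k.1 + 1 < n) (a : Fin q) :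
    phi n q i j s t ms S' S ⟨2 * k.1 + 1, pf⟩ a
      = (if k ∈ S' then 1 else -(Dl q (t k) a)) := by
  have hk := k.2
  unfold phi
  rw [dif_pos (by show 2 * k.1 + 1 < 2 * i; omega),
    if_neg (by show ¬(2 * k.1 + 1) % 2 = 0; omega)]
  have h : ∀ pf2 : (2 * k.1 + 1) / 2 < i, (⟨(2 * k.1 + 1) / 2, pf2⟩ : Fin i) = k := by
    intro pf2; ext; show (2 * k.1 + 1) / 2 = k.1; omega
  rw [h]

lemma phi_mid (k : Fin (n - i - j)) (pf : 2 * i + k.1 < n) (a : Fin q) :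
    phi n q i j s t ms S' S ⟨2 * i + k.1, pf⟩ a = 1 := by
  have hk := k.2
  unfold phi
  rw [dif_neg (by show ¬2 * i + k.1 < 2 * i; omega),
    if_pos (by show 2 * i + k.1 < 2 * i + (n - i - j); omega)]

lemma phi_tail (k : Fin (j - i)) (pf : 2 * i + (n - i - j) + k.1 < n) (a : Fin q) :
    phi n q i j s t ms S' S ⟨2 * i + (n - i - j) + k.1, pf⟩ a
      = (if k ∈ S then Dl q (ms k) a else 1 / q) := by
  have hk := k.2
  unfold phi
  rw [dif_neg (by show ¬2 * i + (n - i - j) + k.1 < 2 * i; omega),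
    if_neg (by show ¬2 * i + (n - i - j) + k.1 < 2 * i + (n - i - j); omega),
    dif_pos (by show 2 * i + (n - i - j) + k.1 - (2 * i + (n - i - j)) < j - i; omega)]
  have h : ∀ pf2 : 2 * i + (n - i - j) + k.1 - (2 * i + (n - i - j)) < j - i,
      (⟨2 * i + (n - i - j) + k.1 - (2 * i + (n - i - j)), pf2⟩ : Fin (j - i)) = k := by
    intro pf2; ext; show 2 * i + (n - i - j) + k.1 - (2 * i + (n - i - j)) = k.1; omega
  rw [h]

lemma mus_pair0 (k : Fin i) (pf : 2 * k.1 < n) :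
    mus n q i j S' S ⟨2 * k.1, pf⟩ = (if k ∈ S' then (-1 : ℝ) else (q : ℝ) - 1) := by
  have hk := k.2
  unfold mus
  rw [dif_pos (by show 2 * k.1 < 2 * i; omega), if_pos (by show 2 * k.1 % 2 = 0; omega)]
  have h : ∀ pf2 : (2 * k.1) / 2 < i, (⟨(2 * k.1) / 2, pf2⟩ : Fin i) = k := by
    intro pf2; ext; show (2 * k.1) / 2 = k.1; omega
  rw [h]

lemma mus_pair1 (k : Fin i) (pf : 2 * k.1 + 1 < n) :
    mus n q i j S' S ⟨2 * k.1 + 1, pf⟩ = (if k ∈ S' then (q : ℝ) - 1 else -1) := by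
  have hk := k.2
  unfold mus
  rw [dif_pos (by show 2 * k.1 + 1 < 2 * i; omega),
    if_neg (by show ¬(2 * k.1 + 1) % 2 = 0; omega)]
  have h : ∀ pf2 : (2 * k.1 + 1) / 2 < i, (⟨(2 * k.1 + 1) / 2, pf2⟩ : Fin i) = k := by
    intro pf2; ext; show (2 * k.1 + 1) / 2 = k.1; omega
  rw [h]

lemma mus_mid (k : Fin (n - i - j)) (pf : 2 * i + k.1 < n) :
    mus n q i j S' S ⟨2 * i + k.1, pf⟩ = (q : ℝ) - 1 := by
  have hk := k.2
  unfold mus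
  rw [dif_neg (by show ¬2 * i + k.1 < 2 * i; omega),
    if_pos (by show 2 * i + k.1 < 2 * i + (n - i - j); omega)]

lemma mus_tail (k : Fin (j - i)) (pf : 2 * i + (n - i - j) + k.1 < n) :
    mus n q i j S' S ⟨2 * i + (n - i - j) + k.1, pf⟩
      = (if k ∈ S then (-1 : ℝ) else (q : ℝ) - 1) := by
  have hk := k.2
  unfold mus
  rw [dif_neg (by show ¬2 * i + (n - i - j) + k.1 < 2 * i; omega),
    if_neg (by show ¬2 * i + (n - i - j) + k.1 < 2 * i + (n - i - j); omega),
    dif_pos (by show 2 * i + (n - i - j) + k.1 - (2 * i + (n - i - j)) < j - i; omega)]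
  have h : ∀ pf2 : 2 * i + (n - i - j) + k.1 - (2 * i + (n - i - j)) < j - i,
      (⟨2 * i + (n - i - j) + k.1 - (2 * i + (n - i - j)), pf2⟩ : Fin (j - i)) = k := by
    intro pf2; ext; show 2 * i + (n - i - j) + k.1 - (2 * i + (n - i - j)) = k.1; omega
  rw [h]

end PhiMu

lemma sum_subsets_prod {α : Type*} [Fintype α] [DecidableEq α] (u v : α → ℝ) :
    (∑ T ∈ (Finset.univ : Finset α).powerset, ∏ k, (if k ∈ T then u k else v k))
      = ∏ k, (u k + v k) := by
  rw [Finset.prod_add]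
  refine Finset.sum_congr rfl fun T hT => ?_
  rw [Finset.prod_ite]
  congr 1
  · congr 1; ext k; simp only [Finset.mem_filter, Finset.mem_univ, true_and]
  · congr 1; ext k; simp [Finset.mem_sdiff]

lemma pair_count (q : ℕ) (sk tk : Fin q) :
    Nat.card {p : Fin q × Fin q // (p.1 = sk ∧ p.2 ≠ tk) ∨ (p.2 = tk ∧ p.1 ≠ sk)}
      = 2 * (q - 1) := by
  rw [Nat.card_eq_fintype_card, Fintype.card_subtype]
  have h : (Finset.univ.filter fun p : Fin q × Fin q =>
        (p.1 = sk ∧ p.2 ≠ tk) ∨ (p.2 = tk ∧ p.1 ≠ sk))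
      = ({sk} ×ˢ Finset.univ.erase tk) ∪ ((Finset.univ.erase sk) ×ˢ {tk}) := by
    ext ⟨a, b⟩
    simp only [Finset.mem_filter, Finset.mem_univ, true_and, Finset.mem_union,
      Finset.mem_product, Finset.mem_singleton, Finset.mem_erase]
    tauto
  rw [h, Finset.card_union_of_disjoint]
  · simp only [Finset.card_product, Finset.card_singleton,
      Finset.card_erase_of_mem (Finset.mem_univ _), Finset.card_univ, Fintype.card_fin]
    omega
  · rw [Finset.disjoint_left]
    rintro ⟨a, b⟩ h1 h2
    simp only [Finset.mem_product, Finset.mem_singleton, Finset.mem_erase] at h1 h2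
    exact h2.1.1 h1.1

lemma coord_negD {q : ℕ} (m a : Fin q) :
    (∑ b : Fin q, if b ≠ a then -(Dl q m b) else 0) = (-1) * -(Dl q m a) := by
  have h2 : ∀ b : Fin q, (if b ≠ a then -(Dl q m b) else 0)
      = -(if b ≠ a then Dl q m b else 0) := fun b => by split <;> simp
  simp only [h2]
  rw [Finset.sum_neg_distrib, coord_D]
  ring

lemma phi_eigen {n i j : ℕ} (q : ℕ) (s t : Fin i → Fin q) (ms : Fin (j - i) → Fin q)
    (S' : Finset (Fin i)) (S : Finset (Fin (j - i))) (m : Fin n) (a : Fin q) :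
    (∑ b : Fin q, if b ≠ a then phi n q i j s t ms S' S m b else 0)
      = mus n q i j S' S m * phi n q i j s t ms S' S m a := by
  unfold phi mus
  split_ifs <;>
    first
      | exact coord_D _ _
      | exact coord_negD _ _
      | exact coord_const 1 a
      | exact coord_const (1/q : ℝ) a

lemma mus_sum {n i j : ℕ} (q : ℕ) (hij : i ≤ j) (hn : i + j ≤ n)
    (S' : Finset (Fin i)) (S : Finset (Fin (j - i))) :
    (∑ m : Fin n, mus n q i j S' S m)
      = (n : ℝ) * ((q : ℝ) - 1) - (q : ℝ) * ((i : ℝ) + (S.card : ℝ)) := by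
  rw [← Equiv.sum_comp (eqv n i j hij hn) (mus n q i j S' S)]
  rw [Fintype.sum_sum_type, Fintype.sum_sum_type, Fintype.sum_prod_type]
  have hpair : ∀ k : Fin i,
      (∑ b : Fin 2, mus n q i j S' S (eqv n i j hij hn (.inl (k, b)))) = (q : ℝ) - 2 := by
    intro k
    have hk := k.2
    rw [Fin.sum_univ_two]
    have e0 : eqv n i j hij hn (.inl (k, 0)) = (⟨2 * k.1, by omega⟩ : Fin n) := by
      rw [eqv_inl]; ext; simp
    have e1 : eqv n i j hij hn (.inl (k, 1)) = (⟨2 * k.1 + 1, by omega⟩ : Fin n) := by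
      rw [eqv_inl]; ext; simp
    rw [e0, e1, mus_pair0, mus_pair1]
    by_cases hk' : k ∈ S' <;> simp [hk'] <;> ring
  have hmid : ∀ k : Fin (n - i - j),
      mus n q i j S' S (eqv n i j hij hn (.inr (.inl k))) = (q : ℝ) - 1 := fun k => by
    rw [eqv_mid, mus_mid]
  have htail : ∀ k : Fin (j - i),
      mus n q i j S' S (eqv n i j hij hn (.inr (.inr k)))
        = (if k ∈ S then (-1 : ℝ) else (q : ℝ) - 1) := fun k => by
    rw [eqv_tail, mus_tail]
  simp only [hpair, hmid, htail]
  rw [Finset.sum_const, Finset.sum_const, Finset.sum_ite, Finset.sum_const, Finset.sum_const]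
  have hc1 : (Finset.univ.filter (fun k : Fin (j - i) => k ∈ S)).card = S.card := by
    congr 1; ext k; simp
  have hc2 : (Finset.univ.filter (fun k : Fin (j - i) => ¬ k ∈ S)).card
      = (j - i) - S.card := by
    have h : (Finset.univ.filter (fun k : Fin (j - i) => ¬ k ∈ S)) = Sᶜ := by ext; simp
    rw [h, Finset.card_compl]; simp
  rw [hc1, hc2]
  simp only [Finset.card_univ, Fintype.card_fin, nsmul_eq_mul]
  have hS : S.card ≤ j - i := by
    have := Finset.card_le_univ S
    simpa using this
  have c1 : ((n - i - j : ℕ) : ℝ) = (n : ℝ) - i - j := by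
    rw [Nat.cast_sub (by omega), Nat.cast_sub (by omega)]
  have c2 : (((j - i) - S.card : ℕ) : ℝ) = ((j : ℝ) - i) - S.card := by
    rw [Nat.cast_sub hS, Nat.cast_sub hij]
  rw [c1, c2]
  ring

lemma a1_eq (q : ℕ) (sk tk a b : Fin q) :
    Dl q sk a + -(Dl q tk b)
      = (if a = sk ∧ b ≠ tk then (1 : ℝ) else if b = tk ∧ a ≠ sk then -1 else 0) := by
  unfold Dl
  by_cases h0 : a = sk <;> by_cases h1 : b = tk <;> simp [h0, h1] <;> ring

lemma delta_eq (q : ℕ) (mk a : Fin q) :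
    Dl q mk a + 1 / q = (if a = mk then (1 : ℝ) else 0) := by
  unfold Dl; ring

lemma prod_phi {n i j : ℕ} (q : ℕ) (hij : i ≤ j) (hn : i + j ≤ n)
    (s t : Fin i → Fin q) (ms : Fin (j - i) → Fin q)
    (S' : Finset (Fin i)) (S : Finset (Fin (j - i))) (x : Fin n → Fin q) :
    (∏ m : Fin n, phi n q i j s t ms S' S m (x m))
      = (∏ k : Fin i,
          ((if k ∈ S' then Dl q (s k) (x ⟨2 * k.1, by omega⟩) else 1)
            * (if k ∈ S' then 1
               else -(Dl q (t k) (x ⟨2 * k.1 + 1, by omega⟩)))))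
        * ∏ k : Fin (j - i),
            (if k ∈ S then Dl q (ms k) (x ⟨2 * i + (n - i - j) + k.1, by omega⟩)
             else 1 / q) := by
  rw [← Equiv.prod_comp (eqv n i j hij hn) (fun m => phi n q i j s t ms S' S m (x m))]
  rw [Fintype.prod_sum_type, Fintype.prod_sum_type, Fintype.prod_prod_type]
  have hmid : (∏ k : Fin (n - i - j),
      phi n q i j s t ms S' S (eqv n i j hij hn (.inr (.inl k)))
        (x (eqv n i j hij hn (.inr (.inl k))))) = 1 := by
    apply Finset.prod_eq_one
    intro k _
    rw [eqv_mid, phi_mid]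
  have hpair : ∀ k : Fin i,
      (∏ b : Fin 2, phi n q i j s t ms S' S (eqv n i j hij hn (.inl (k, b)))
          (x (eqv n i j hij hn (.inl (k, b)))))
        = (if k ∈ S' then Dl q (s k) (x ⟨2 * k.1, by omega⟩) else 1)
            * (if k ∈ S' then 1
               else -(Dl q (t k) (x ⟨2 * k.1 + 1, by omega⟩))) := by
    intro k
    have hk := k.2
    rw [Fin.prod_univ_two]
    have e0 : eqv n i j hij hn (.inl (k, 0)) = (⟨2 * k.1, by omega⟩ : Fin n) := by
      rw [eqv_inl]; ext; simp
    have e1 : eqv n i j hij hn (.inl (k, 1)) = (⟨2 * k.1 + 1, by omega⟩ : Fin n) := by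
      rw [eqv_inl]; ext; simp
    rw [e0, e1, phi_pair0, phi_pair1]
  have htail : ∀ k : Fin (j - i),
      phi n q i j s t ms S' S (eqv n i j hij hn (.inr (.inr k)))
          (x (eqv n i j hij hn (.inr (.inr k))))
        = (if k ∈ S then Dl q (ms k) (x ⟨2 * i + (n - i - j) + k.1, by omega⟩)
           else 1 / q) := by
    intro k
    rw [eqv_tail, phi_tail]
  rw [hmid, one_mul]
  rw [Finset.prod_congr rfl (fun k _ => hpair k), Finset.prod_congr rfl (fun k _ => htail k)]

noncomputable def gfun (n q i j : ℕ) (c : ℝ) (s t : Fin i → Fin q)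
    (ms : Fin (j - i) → Fin q) : ℕ → (Fin n → Fin q) → ℝ := fun tt x =>
  ∑ S ∈ Finset.powersetCard (tt - i) (Finset.univ : Finset (Fin (j - i))),
    c * ∑ S' ∈ (Finset.univ : Finset (Fin i)).powerset,
      ∏ m, phi n q i j s t ms S' S m (x m)

lemma gfun_memU {n q i j : ℕ} (hij : i ≤ j) (hn : i + j ≤ n) (c : ℝ)
    (s t : Fin i → Fin q) (ms : Fin (j - i) → Fin q) (tt : ℕ)
    (htt : tt ∈ Finset.Icc i j) :
    memU n q tt (gfun n q i j c s t ms tt) := by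
  obtain ⟨h1, h2⟩ := Finset.mem_Icc.mp htt
  unfold memU gfun
  apply eig_sum
  intro S hS
  have hcard : S.card = tt - i := (Finset.mem_powersetCard.mp hS).2
  apply eig_const_mul
  apply eig_sum
  intro S' _
  have hk := key_eigen (phi n q i j s t ms S' S) (mus n q i j S' S)
    (phi_eigen q s t ms S' S)
  rw [mus_sum q hij hn S' S] at hk
  have hcast : (i : ℝ) + (S.card : ℝ) = (tt : ℝ) := by
    rw [hcard, Nat.cast_sub h1]; ring
  rw [hcast] at hk
  exact hk

lemma count_pairfun (q i : ℕ) (s t : Fin i → Fin q) :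
    Nat.card {w : Fin i × Fin 2 → Fin q //
        ∀ k : Fin i, ((w (k, 0) = s k ∧ w (k, 1) ≠ t k)
          ∨ (w (k, 1) = t k ∧ w (k, 0) ≠ s k))}
      = (2 * (q - 1)) ^ i := by
  have e1 : {w : Fin i × Fin 2 → Fin q //
        ∀ k : Fin i, ((w (k, 0) = s k ∧ w (k, 1) ≠ t k)
          ∨ (w (k, 1) = t k ∧ w (k, 0) ≠ s k))}
      ≃ {v : Fin i → Fin 2 → Fin q //
        ∀ k : Fin i, ((v k 0 = s k ∧ v k 1 ≠ t k)
          ∨ (v k 1 = t k ∧ v k 0 ≠ s k))} :=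
    Equiv.subtypeEquiv (Equiv.curry (Fin i) (Fin 2) (Fin q)) (fun w => Iff.rfl)
  have e2 : {v : Fin i → Fin 2 → Fin q //
        ∀ k : Fin i, ((v k 0 = s k ∧ v k 1 ≠ t k)
          ∨ (v k 1 = t k ∧ v k 0 ≠ s k))}
      ≃ ∀ k : Fin i, {u : Fin 2 → Fin q //
          ((u 0 = s k ∧ u 1 ≠ t k) ∨ (u 1 = t k ∧ u 0 ≠ s k))} :=
    Equiv.subtypePiEquivPi (β := fun _ : Fin i => Fin 2 → Fin q)
      (p := fun k u => ((u 0 = s k ∧ u 1 ≠ t k) ∨ (u 1 = t k ∧ u 0 ≠ s k)))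
  rw [Nat.card_congr (e1.trans e2), Nat.card_pi]
  have e3 : ∀ k : Fin i,
      Nat.card {u : Fin 2 → Fin q // ((u 0 = s k ∧ u 1 ≠ t k) ∨ (u 1 = t k ∧ u 0 ≠ s k))}
        = 2 * (q - 1) := by
    intro k
    have e4 : {u : Fin 2 → Fin q // ((u 0 = s k ∧ u 1 ≠ t k) ∨ (u 1 = t k ∧ u 0 ≠ s k))}
        ≃ {p : Fin q × Fin q // ((p.1 = s k ∧ p.2 ≠ t k) ∨ (p.2 = t k ∧ p.1 ≠ s k))} :=
      Equiv.subtypeEquiv (piFinTwoEquiv (fun _ => Fin q)) (fun u => Iff.rfl)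
    rw [Nat.card_congr e4, pair_count]
  simp only [e3]
  rw [Finset.prod_const, Finset.card_univ, Fintype.card_fin]

lemma count_main (n q i j : ℕ) (hij : i ≤ j) (hn : i + j ≤ n)
    (s t : Fin i → Fin q) (ms : Fin (j - i) → Fin q) :
    Nat.card {z : (Fin i × Fin 2) ⊕ (Fin (n - i - j) ⊕ Fin (j - i)) → Fin q //
        (∀ k : Fin i, ((z (.inl (k, 0)) = s k ∧ z (.inl (k, 1)) ≠ t k)
          ∨ (z (.inl (k, 1)) = t k ∧ z (.inl (k, 0)) ≠ s k)))
        ∧ (∀ k : Fin (j - i), z (.inr (.inr k)) = ms k)}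
      = 2 ^ i * (q - 1) ^ i * q ^ (n - i - j) := by
  have s1 : {z : (Fin i × Fin 2) ⊕ (Fin (n - i - j) ⊕ Fin (j - i)) → Fin q //
        (∀ k : Fin i, ((z (.inl (k, 0)) = s k ∧ z (.inl (k, 1)) ≠ t k)
          ∨ (z (.inl (k, 1)) = t k ∧ z (.inl (k, 0)) ≠ s k)))
        ∧ (∀ k : Fin (j - i), z (.inr (.inr k)) = ms k)}
      ≃ {p : (Fin i × Fin 2 → Fin q) × ((Fin (n - i - j) ⊕ Fin (j - i)) → Fin q) //
        (∀ k : Fin i, ((p.1 (k, 0) = s k ∧ p.1 (k, 1) ≠ t k)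
          ∨ (p.1 (k, 1) = t k ∧ p.1 (k, 0) ≠ s k)))
        ∧ (∀ k : Fin (j - i), p.2 (.inr k) = ms k)} :=
    Equiv.subtypeEquiv
      (Equiv.sumArrowEquivProdArrow (Fin i × Fin 2) (Fin (n - i - j) ⊕ Fin (j - i)) (Fin q))
      (fun z => Iff.rfl)
  have s2 := Equiv.subtypeProdEquivProd
    (p := fun w : Fin i × Fin 2 → Fin q =>
      (∀ k : Fin i, ((w (k, 0) = s k ∧ w (k, 1) ≠ t k)
        ∨ (w (k, 1) = t k ∧ w (k, 0) ≠ s k))))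
    (q := fun w : (Fin (n - i - j) ⊕ Fin (j - i)) → Fin q =>
      (∀ k : Fin (j - i), w (.inr k) = ms k))
  rw [Nat.card_congr (s1.trans s2), Nat.card_prod, count_pairfun]
  have s3 : {w : (Fin (n - i - j) ⊕ Fin (j - i)) → Fin q //
        (∀ k : Fin (j - i), w (.inr k) = ms k)}
      ≃ {p : (Fin (n - i - j) → Fin q) × (Fin (j - i) → Fin q) //
        True ∧ (∀ k : Fin (j - i), p.2 k = ms k)} :=
    Equiv.subtypeEquiv
      (Equiv.sumArrowEquivProdArrow (Fin (n - i - j)) (Fin (j - i)) (Fin q))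
      (fun w => Iff.intro (fun h => ⟨trivial, h⟩) (fun h => h.2))
  have s4 := Equiv.subtypeProdEquivProd
    (p := fun _ : Fin (n - i - j) → Fin q => True)
    (q := fun v : Fin (j - i) → Fin q => (∀ k : Fin (j - i), v k = ms k))
  rw [Nat.card_congr (s3.trans s4), Nat.card_prod]
  have s5 : Nat.card {u : Fin (n - i - j) → Fin q // True} = q ^ (n - i - j) := by
    rw [Nat.card_congr (Equiv.subtypeUnivEquiv (fun _ => trivial)),
      Nat.card_eq_fintype_card, Fintype.card_fun]
    simp
  have s6 : Nat.card {v : Fin (j - i) → Fin q // ∀ k : Fin (j - i), v k = ms k} = 1 := by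
    rw [Nat.card_congr (Equiv.subtypePiEquivPi (β := fun _ : Fin (j - i) => Fin q)
      (p := fun k b => b = ms k)), Nat.card_pi]
    have : ∀ k : Fin (j - i), Nat.card {b : Fin q // b = ms k} = 1 := fun k => by
      rw [Nat.card_eq_fintype_card, Fintype.card_subtype_eq]
    simp only [this]
    simp
  rw [s5, s6, mul_pow]
  ring

-- MAIN
set_option maxHeartbeats 3200000 in
/-- for n ≥ i+j, the tensor product of a nonzero constant c, i functions
a₁(s_k,t_k) (on coordinate pairs), n-i-j constant-1 functions and j-i indicators a₄(m_k)
lies in U_{[i,j]}(n,q) and has support of cardinality exactly 2^i (q-1)^i q^{n-i-j}. -/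
theorem construction_F1 (n q i j : ℕ) (hij : i ≤ j) (hn : i + j ≤ n)
    (c : ℝ) (hc : c ≠ 0) (s t : Fin i → Fin q) (ms : Fin (j - i) → Fin q)
    (f : (Fin n → Fin q) → ℝ)
    (hf : f = fun x => c *
      (∏ k : Fin i,
        (if x ⟨2 * (k : ℕ), by have := k.isLt; omega⟩ = s k ∧
              x ⟨2 * (k : ℕ) + 1, by have := k.isLt; omega⟩ ≠ t k then (1 : ℝ)
          else if x ⟨2 * (k : ℕ) + 1, by have := k.isLt; omega⟩ = t k ∧
              x ⟨2 * (k : ℕ), by have := k.isLt; omega⟩ ≠ s k then -1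
          else 0)) *
      (∏ k : Fin (n - i - j), (1 : ℝ)) *
      (∏ k : Fin (j - i),
        (if x ⟨2 * i + (n - i - j) + (k : ℕ), by have := k.isLt; omega⟩ = ms k
          then (1 : ℝ) else 0))) :
    memUI n q i j f ∧ suppCard n q f = 2 ^ i * (q - 1) ^ i * q ^ (n - i - j) := by
  constructor
  · -- membership in U_{[i,j]}
    refine ⟨gfun n q i j c s t ms, fun tt htt => gfun_memU hij hn c s t ms tt htt, ?_⟩
    have key : ∀ x : Fin n → Fin q,
        c * (∏ k : Fin i,
            (if x ⟨2 * k.1, by have := k.2; omega⟩ = s k ∧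
                  x ⟨2 * k.1 + 1, by have := k.2; omega⟩ ≠ t k then (1 : ℝ)
              else if x ⟨2 * k.1 + 1, by have := k.2; omega⟩ = t k ∧
                  x ⟨2 * k.1, by have := k.2; omega⟩ ≠ s k then -1
              else 0)) *
          (∏ _k : Fin (n - i - j), (1 : ℝ)) *
          (∏ k : Fin (j - i),
            (if x ⟨2 * i + (n - i - j) + k.1, by have := k.2; omega⟩ = ms k
              then (1 : ℝ) else 0))
          = ∑ tt ∈ Finset.Icc i j, gfun n q i j c s t ms tt x := by
      intro x
      have hre : Finset.Icc i j
          = Finset.map ⟨fun r => i + r, add_right_injective i⟩ (Finset.range (j - i + 1)) := by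
        ext v
        simp only [Finset.mem_Icc, Finset.mem_map, Finset.mem_range, Function.Embedding.coeFn_mk]
        constructor
        · rintro ⟨h1, h2⟩; exact ⟨v - i, by omega, by omega⟩
        · rintro ⟨a, ha, rfl⟩; omega
      rw [hre, Finset.sum_map]
      simp only [Function.Embedding.coeFn_mk]
      unfold gfun
      have hsub : ∀ r : ℕ, (i + r) - i = r := fun r => by omega
      simp only [hsub]
      rw [show (j - i + 1) = (Finset.univ : Finset (Fin (j - i))).card + 1 by simp]
      rw [← Finset.sum_powerset]
      have hAS : ∀ S : Finset (Fin (j - i)),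
          (∑ S' ∈ (Finset.univ : Finset (Fin i)).powerset,
            ∏ m, phi n q i j s t ms S' S m (x m))
          = (∏ k : Fin i,
              (if x ⟨2 * k.1, by have := k.2; omega⟩ = s k ∧
                    x ⟨2 * k.1 + 1, by have := k.2; omega⟩ ≠ t k then (1 : ℝ)
                else if x ⟨2 * k.1 + 1, by have := k.2; omega⟩ = t k ∧
                    x ⟨2 * k.1, by have := k.2; omega⟩ ≠ s k then -1
                else 0))
            * ∏ k : Fin (j - i),
                (if k ∈ S then Dl q (ms k) (x ⟨2 * i + (n - i - j) + k.1, by have := k.2; omega⟩)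
                 else 1 / q) := by
        intro S
        have hpp := fun S' => prod_phi q hij hn s t ms S' S x
        simp only [hpp]
        rw [← Finset.sum_mul]
        congr 1
        have hblock : ∀ (S' : Finset (Fin i)) (k : Fin i),
            ((if k ∈ S' then Dl q (s k) (x ⟨2 * k.1, by have := k.2; omega⟩) else 1)
              * (if k ∈ S' then 1
                 else -(Dl q (t k) (x ⟨2 * k.1 + 1, by have := k.2; omega⟩))))
            = (if k ∈ S' then Dl q (s k) (x ⟨2 * k.1, by have := k.2; omega⟩)
               else -(Dl q (t k) (x ⟨2 * k.1 + 1, by have := k.2; omega⟩))) := by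
          intro S' k
          split_ifs <;> ring
        calc (∑ S' ∈ (Finset.univ : Finset (Fin i)).powerset, ∏ k : Fin i,
                ((if k ∈ S' then Dl q (s k) (x ⟨2 * k.1, by have := k.2; omega⟩) else 1)
                  * (if k ∈ S' then 1
                     else -(Dl q (t k) (x ⟨2 * k.1 + 1, by have := k.2; omega⟩)))))
            = ∑ S' ∈ (Finset.univ : Finset (Fin i)).powerset, ∏ k : Fin i,
                (if k ∈ S' then Dl q (s k) (x ⟨2 * k.1, by have := k.2; omega⟩)
                 else -(Dl q (t k) (x ⟨2 * k.1 + 1, by have := k.2; omega⟩))) := by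
              refine Finset.sum_congr rfl fun S' _ => Finset.prod_congr rfl fun k _ => ?_
              exact hblock S' k
          _ = ∏ k : Fin i,
                (Dl q (s k) (x ⟨2 * k.1, by have := k.2; omega⟩)
                  + -(Dl q (t k) (x ⟨2 * k.1 + 1, by have := k.2; omega⟩))) :=
              sum_subsets_prod _ _
          _ = _ := by
              refine Finset.prod_congr rfl fun k _ => ?_
              exact a1_eq q (s k) (t k) _ _
      calc c * (∏ k : Fin i,
              (if x ⟨2 * k.1, by have := k.2; omega⟩ = s k ∧
                    x ⟨2 * k.1 + 1, by have := k.2; omega⟩ ≠ t k then (1 : ℝ)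
                else if x ⟨2 * k.1 + 1, by have := k.2; omega⟩ = t k ∧
                    x ⟨2 * k.1, by have := k.2; omega⟩ ≠ s k then -1
                else 0)) *
            (∏ _k : Fin (n - i - j), (1 : ℝ)) *
            (∏ k : Fin (j - i),
              (if x ⟨2 * i + (n - i - j) + k.1, by have := k.2; omega⟩ = ms k
                then (1 : ℝ) else 0))
          = c * (∏ k : Fin i,
              (if x ⟨2 * k.1, by have := k.2; omega⟩ = s k ∧
                    x ⟨2 * k.1 + 1, by have := k.2; omega⟩ ≠ t k then (1 : ℝ)
                else if x ⟨2 * k.1 + 1, by have := k.2; omega⟩ = t k ∧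
                    x ⟨2 * k.1, by have := k.2; omega⟩ ≠ s k then -1
                else 0)) *
            (∑ S ∈ (Finset.univ : Finset (Fin (j - i))).powerset, ∏ k : Fin (j - i),
              (if k ∈ S then Dl q (ms k) (x ⟨2 * i + (n - i - j) + k.1, by have := k.2; omega⟩)
               else 1 / q)) := by
            rw [Finset.prod_const_one, mul_one]
            congr 1
            rw [sum_subsets_prod]
            refine Finset.prod_congr rfl fun k _ => ?_
            exact (delta_eq q (ms k) _).symm
        _ = ∑ S ∈ (Finset.univ : Finset (Fin (j - i))).powerset,
              c * ∑ S' ∈ (Finset.univ : Finset (Fin i)).powerset,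
                ∏ m, phi n q i j s t ms S' S m (x m) := by
            rw [Finset.mul_sum]
            refine Finset.sum_congr rfl fun S _ => ?_
            rw [hAS S]
            ring
    funext x
    rw [hf, Finset.sum_apply]
    exact key x
  · -- support cardinality
    have hgood : ∀ x : Fin n → Fin q, f x ≠ 0 ↔
        ((∀ k : Fin i, ((x ⟨2 * k.1, by have := k.2; omega⟩ = s k ∧
              x ⟨2 * k.1 + 1, by have := k.2; omega⟩ ≠ t k)
            ∨ (x ⟨2 * k.1 + 1, by have := k.2; omega⟩ = t k ∧
              x ⟨2 * k.1, by have := k.2; omega⟩ ≠ s k)))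
          ∧ (∀ k : Fin (j - i), x ⟨2 * i + (n - i - j) + k.1, by have := k.2; omega⟩ = ms k)) := by
      intro x
      rw [hf]
      simp only
      rw [Finset.prod_const_one, mul_one]
      rw [mul_ne_zero_iff, mul_ne_zero_iff]
      rw [Finset.prod_ne_zero_iff, Finset.prod_ne_zero_iff]
      have l1 : ∀ (A B : Prop) (dA : Decidable A) (dB : Decidable B),
          ((if A then (1 : ℝ) else if B then -1 else 0) ≠ 0) ↔ (A ∨ B) := by
        intro A B dA dB
        split_ifs with h1 h2
        · simp only [ne_eq, one_ne_zero, not_false_eq_true, true_iff]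
          exact Or.inl h1
        · constructor
          · intro _; exact Or.inr h2
          · intro _; norm_num
        · simp [h1, h2]
      have l2 : ∀ (A : Prop) (dA : Decidable A), ((if A then (1 : ℝ) else 0) ≠ 0) ↔ A := by
        intro A dA
        split_ifs with h <;> simp [h]
      constructor
      · rintro ⟨⟨hc1, h1⟩, h2⟩
        exact ⟨fun k => (l1 _ _ _ _).mp (h1 k (Finset.mem_univ k)),
          fun k => (l2 _ _).mp (h2 k (Finset.mem_univ k))⟩
      · rintro ⟨h1, h2⟩
        exact ⟨⟨hc, fun k _ => (l1 _ _ _ _).mpr (h1 k)⟩,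
          fun k _ => (l2 _ _).mpr (h2 k)⟩
    unfold suppCard
    calc Nat.card {x : Fin n → Fin q // f x ≠ 0}
        = Nat.card {z : (Fin i × Fin 2) ⊕ (Fin (n - i - j) ⊕ Fin (j - i)) → Fin q //
            (∀ k : Fin i, ((z (.inl (k, 0)) = s k ∧ z (.inl (k, 1)) ≠ t k)
              ∨ (z (.inl (k, 1)) = t k ∧ z (.inl (k, 0)) ≠ s k)))
            ∧ (∀ k : Fin (j - i), z (.inr (.inr k)) = ms k)} := by
          apply Nat.card_congr
          refine Equiv.subtypeEquiv
            ((eqv n i j hij hn).arrowCongr (Equiv.refl (Fin q))).symm (fun x => ?_)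
          rw [hgood x]
          exact Iff.rfl
      _ = 2 ^ i * (q - 1) ^ i * q ^ (n - i - j) := count_main n q i j hij hn s t ms
end

section
/- Let i+j > n and let f = c · ∏_{k=1}^{n-j} g_k · ∏_{k=1}^{i+j-n} h_k · ∏_{k=1}^{j-i} v_k be a tensor product where c ≠ 0 is a constant, each g_k is a function a₁(s,t) on Σ_q² (support size 2(q-1)), each h_k = a₂(s,t) with s ≠ t on Σ_q (value 1 at s, −1 at t, 0 otherwise), and each v_k = a₄(m) an indicator of a point of Σ_q. Then f ∈ U_{[i,j]}(n,q) and the support of f has cardinality exactly 2^i (q-1)^{n-j}. -/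
lemma adjSum_eq {n q : ℕ} (f : (Fin n → Fin q) → ℝ) (x : Fin n → Fin q) :
    adjSum n q f x
      = ∑ m : Fin n, ∑ v : Fin q, if v ≠ x m then f (Function.update x m v) else 0 := by
  classical
  rw [adjSum, ← Finset.sum_filter]
  rw [show (∑ m : Fin n, ∑ v : Fin q, if v ≠ x m then f (Function.update x m v) else 0)
      = ∑ mv : Fin n × Fin q, if mv.2 ≠ x mv.1 then f (Function.update x mv.1 mv.2) else 0 by
    rw [Fintype.sum_prod_type]]
  rw [← Finset.sum_filter]
  refine (Finset.sum_bij (fun mv _ => Function.update x mv.1 mv.2) ?_ ?_ ?_ ?_).symm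
  · rintro ⟨m, v⟩ hmv
    simp only [ne_eq, Finset.mem_filter, Finset.mem_univ, true_and] at hmv ⊢
    rw [hammingDist]
    rw [show ({i | x i ≠ Function.update x m v i} : Finset (Fin n)) = {m} by
      ext k
      simp only [Finset.mem_filter, Finset.mem_univ, true_and, Finset.mem_singleton]
      rcases eq_or_ne k m with rfl | hk
      · simp only [Function.update_self, Finset.mem_singleton]
        constructor
        · intro _; trivial
        · intro _; exact fun h => hmv h.symm
      · simp [Function.update_of_ne hk, hk]]
    simp
  · rintro ⟨m, v⟩ hmv ⟨m', v'⟩ hmv' h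
    simp only [ne_eq, Finset.mem_filter, Finset.mem_univ, true_and] at hmv hmv'
    have h' : Function.update x m v = Function.update x m' v' := h
    rcases eq_or_ne m m' with rfl | hmm
    · have := congrFun h' m
      simp only [Function.update_self] at this
      exact Prod.ext rfl this
    · exfalso
      have := congrFun h' m
      rw [Function.update_self, Function.update_of_ne hmm] at this
      exact hmv this
  · intro y hy
    simp only [Finset.mem_filter, Finset.mem_univ, true_and] at hy
    rw [hammingDist] at hy
    obtain ⟨m, hm⟩ := Finset.card_eq_one.mp hy
    have hmem : ∀ k : Fin n, x k ≠ y k ↔ k = m := by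
      intro k
      constructor
      · intro hk
        have hk2 : k ∈ Finset.filter (fun i => x i ≠ y i) Finset.univ := by simpa using hk
        rw [hm] at hk2; simpa using hk2
      · intro hk
        have hk2 : k ∈ Finset.filter (fun i => x i ≠ y i) Finset.univ := by
          rw [hm, Finset.mem_singleton]; exact hk
        simpa using hk2
    refine ⟨(m, y m), ?_, ?_⟩
    · simp only [ne_eq, Finset.mem_filter, Finset.mem_univ, true_and]
      exact fun h => ((hmem m).mpr rfl) h.symm
    · show Function.update x m (y m) = y
      funext k
      rcases eq_or_ne k m with rfl | hk
      · simp
      · rw [Function.update_of_ne hk]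
        by_contra hne
        exact hk ((hmem k).mp hne)
  · intros; rfl

lemma eigen_tensor {n q : ℕ} (φ : Fin n → Fin q → ℝ) (T : Finset (Fin n))
    (h0 : ∀ m ∈ T, ∑ v, φ m v = 0) (h1 : ∀ m ∉ T, ∀ v w, φ m v = φ m w) :
    memU n q T.card (fun x => ∏ m, φ m (x m)) := by
  classical
  intro x
  rw [adjSum_eq]
  have key : ∀ m : Fin n,
      (∑ v : Fin q, if v ≠ x m then (∏ k, φ k (Function.update x m v k)) else 0)
      = (if m ∈ T then -1 else (q : ℝ) - 1) * ∏ k, φ k (x k) := by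
    intro m
    have hprod : ∀ v, (∏ k, φ k (Function.update x m v k))
        = φ m v * ∏ k ∈ Finset.univ.erase m, φ k (x k) := by
      intro v
      rw [← Finset.mul_prod_erase Finset.univ _ (Finset.mem_univ m), Function.update_self]
      congr 1
      exact Finset.prod_congr rfl fun k hk =>
        by rw [Function.update_of_ne (Finset.ne_of_mem_erase hk)]
    have hx : (∏ k, φ k (x k)) = φ m (x m) * ∏ k ∈ Finset.univ.erase m, φ k (x k) :=
      (Finset.mul_prod_erase Finset.univ _ (Finset.mem_univ m)).symm
    calc (∑ v : Fin q, if v ≠ x m then (∏ k, φ k (Function.update x m v k)) else 0)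
        = ∑ v : Fin q, (if v ≠ x m then φ m v else 0) * ∏ k ∈ Finset.univ.erase m, φ k (x k) := by
          refine Finset.sum_congr rfl fun v _ => ?_
          split <;> simp [hprod]
      _ = ((∑ v : Fin q, φ m v) - φ m (x m)) * ∏ k ∈ Finset.univ.erase m, φ k (x k) := by
          rw [← Finset.sum_mul]
          congr 1
          have : ∀ v : Fin q, (if v ≠ x m then φ m v else 0)
              = φ m v - (if v = x m then φ m v else 0) := by
            intro v
            by_cases hv : v = x m
            · subst hv; simp
            · simp [hv]
          rw [Finset.sum_congr rfl fun v _ => this v, Finset.sum_sub_distrib,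
            Finset.sum_ite_eq' Finset.univ (x m) (φ m)]
          simp
      _ = (if m ∈ T then -1 else (q : ℝ) - 1) * ∏ k, φ k (x k) := by
          by_cases hm : m ∈ T
          · rw [h0 m hm, hx, if_pos hm]; ring
          · have hconst : ∑ v : Fin q, φ m v = q * φ m (x m) := by
              rw [Finset.sum_congr rfl fun v _ => h1 m hm v (x m)]
              simp [Finset.card_univ, mul_comm]
            rw [hconst, hx, if_neg hm]; ring
  rw [Finset.sum_congr rfl fun m _ => key m, ← Finset.sum_mul]
  congr 1
  have : ∀ m : Fin n, (if m ∈ T then (-1 : ℝ) else (q : ℝ) - 1)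
      = ((q : ℝ) - 1) - (if m ∈ T then (q : ℝ) else 0) := by
    intro m; split <;> ring
  rw [Finset.sum_congr rfl fun m _ => this m, Finset.sum_sub_distrib]
  rw [Finset.sum_const, Finset.card_univ]
  have : (∑ m : Fin n, if m ∈ T then (q:ℝ) else 0) = T.card * q := by
    simp [Finset.sum_ite_mem, Finset.sum_const]
  rw [this]
  simp only [Fintype.card_fin, nsmul_eq_mul]
  ring


lemma memU_zero (n q t : ℕ) : memU n q t (0 : (Fin n → Fin q) → ℝ) := by
  intro x
  simp [adjSum]

lemma memUI_of_memU {n q i j t : ℕ} {f : (Fin n → Fin q) → ℝ}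
    (ht : t ∈ Finset.Icc i j) (hf : memU n q t f) : memUI n q i j f := by
  classical
  refine ⟨fun t' => if t' = t then f else 0, ?_, ?_⟩
  · intro t' _
    by_cases h : t' = t
    · subst h; simpa using hf
    · simp only [h, if_neg, ite_false]
      exact memU_zero n q t'
  · rw [Finset.sum_ite_eq' (Finset.Icc i j) t (fun _ => f), if_pos ht]

lemma memUI_zero (n q i j : ℕ) (hij : i ≤ j) : memUI n q i j 0 :=
  memUI_of_memU (by simp [hij]) (memU_zero n q i)

lemma memU_add {n q t : ℕ} {f g : (Fin n → Fin q) → ℝ} (hf : memU n q t f)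
    (hg : memU n q t g) : memU n q t (f + g) := by
  intro x
  have : adjSum n q (f + g) x = adjSum n q f x + adjSum n q g x := by
    rw [adjSum, adjSum, adjSum, ← Finset.sum_add_distrib]
    refine Finset.sum_congr rfl fun y _ => ?_
    split <;> simp
  rw [this, hf x, hg x, Pi.add_apply]
  ring

lemma memUI_add {n q i j : ℕ} {f g : (Fin n → Fin q) → ℝ} (hf : memUI n q i j f)
    (hg : memUI n q i j g) : memUI n q i j (f + g) := by
  obtain ⟨gf, hgf, rfl⟩ := hf
  obtain ⟨gg, hgg, rfl⟩ := hg
  refine ⟨fun t => gf t + gg t, fun t ht => memU_add (hgf t ht) (hgg t ht), ?_⟩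
  rw [Finset.sum_add_distrib]

lemma memUI_sum {n q i j : ℕ} (hij : i ≤ j) {κ : Type*} (A : Finset κ)
    (F : κ → (Fin n → Fin q) → ℝ) (h : ∀ k ∈ A, memUI n q i j (F k)) :
    memUI n q i j (∑ k ∈ A, F k) := by
  classical
  induction A using Finset.induction_on with
  | empty => simpa using memUI_zero n q i j hij
  | insert a A₀ hni ih =>
      rw [Finset.sum_insert hni]
      exact memUI_add (h a (Finset.mem_insert_self a A₀))
        (ih fun k hk => h k (Finset.mem_insert_of_mem hk))

@[to_additive]
lemma prod_range_two_mul {M : Type*} [CommMonoid M] (w : ℕ) (G : ℕ → M) :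
    ∏ m ∈ Finset.range (2 * w), G m = ∏ k ∈ Finset.range w, G (2 * k) * G (2 * k + 1) := by
  induction w with
  | zero => simp
  | succ w ih =>
      rw [show 2 * (w + 1) = 2 * w + 1 + 1 by ring, Finset.prod_range_succ,
        Finset.prod_range_succ, ih, Finset.prod_range_succ, mul_assoc]

@[to_additive]
lemma prod_split {M : Type*} [CommMonoid M] (w a b : ℕ) (F : ℕ → M) :
    ∏ m ∈ Finset.range (2 * w + a + b), F m
      = (∏ k ∈ Finset.range w, F (2 * k) * F (2 * k + 1))
        * (∏ k ∈ Finset.range a, F (2 * w + k))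
        * ∏ k ∈ Finset.range b, F (2 * w + a + k) := by
  rw [Finset.prod_range_add, Finset.prod_range_add, prod_range_two_mul]

/-- Coordinate factor functions for the expansion of `f` indexed by `E ⊆ Fin w`, `S ⊆ Fin b`. -/
noncomputable def phiF (n q w a b : ℕ) (hnn : n = 2 * w + a + b) (s t : Fin w → Fin q)
    (p r : Fin a → Fin q) (ms : Fin b → Fin q) (E : Finset (Fin w)) (S : Finset (Fin b)) :
    Fin n → Fin q → ℝ := fun m v =>
  if h1 : (m : ℕ) < 2 * w then
    if (m : ℕ) % 2 = 0 then
      (if (⟨(m : ℕ) / 2, by omega⟩ : Fin w) ∈ E then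
        (if v = s ⟨(m : ℕ) / 2, by omega⟩ then 1 else 0) - 1 / q else 1)
    else
      (if (⟨(m : ℕ) / 2, by omega⟩ : Fin w) ∈ E then 1
        else -((if v = t ⟨(m : ℕ) / 2, by omega⟩ then 1 else 0) - 1 / q))
  else if h2 : (m : ℕ) < 2 * w + a then
    (if v = p ⟨(m : ℕ) - 2 * w, by omega⟩ then 1 else 0)
      - (if v = r ⟨(m : ℕ) - 2 * w, by omega⟩ then 1 else 0)
  else
    (if (⟨(m : ℕ) - 2 * w - a, by have := m.isLt; omega⟩ : Fin b) ∈ S then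
      (if v = ms ⟨(m : ℕ) - 2 * w - a, by have := m.isLt; omega⟩ then 1 else 0) - 1 / q
      else 1 / q)

section phiEval

variable {n q w a b : ℕ} (hnn : n = 2 * w + a + b) (s t : Fin w → Fin q)
    (p r : Fin a → Fin q) (ms : Fin b → Fin q) (E : Finset (Fin w)) (S : Finset (Fin b))

lemma phiF_at_even (k : Fin w) (h : 2 * (k : ℕ) < n) (v : Fin q) :
    phiF n q w a b hnn s t p r ms E S ⟨2 * (k : ℕ), h⟩ v
      = (if k ∈ E then (if v = s k then (1:ℝ) else 0) - 1 / (q:ℝ) else 1) := by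
  have hk : (2 * (k : ℕ)) / 2 = (k : ℕ) := by omega
  have hlt : (2 * (k : ℕ)) < 2 * w := by have := k.isLt; omega
  simp only [phiF, hlt, dif_pos, Nat.mul_mod_right, if_pos, hk, Fin.eta]

lemma phiF_at_odd (k : Fin w) (h : 2 * (k : ℕ) + 1 < n) (v : Fin q) :
    phiF n q w a b hnn s t p r ms E S ⟨2 * (k : ℕ) + 1, h⟩ v
      = (if k ∈ E then 1 else -((if v = t k then (1:ℝ) else 0) - 1 / (q:ℝ))) := by
  have hk : (2 * (k : ℕ) + 1) / 2 = (k : ℕ) := by omega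
  have hlt : (2 * (k : ℕ) + 1) < 2 * w := by have := k.isLt; omega
  have hmod : ¬((2 * (k : ℕ) + 1) % 2 = 0) := by omega
  simp only [phiF, hlt, dif_pos, hmod, if_neg, if_false, hk, Fin.eta]

lemma phiF_at_mid (k : Fin a) (h : 2 * w + (k : ℕ) < n) (v : Fin q) :
    phiF n q w a b hnn s t p r ms E S ⟨2 * w + (k : ℕ), h⟩ v
      = (if v = p k then (1:ℝ) else 0) - (if v = r k then (1:ℝ) else 0) := by
  have h1 : ¬((2 * w + (k : ℕ)) < 2 * w) := by omega
  have h2 : (2 * w + (k : ℕ)) < 2 * w + a := by have := k.isLt; omega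
  have hk : 2 * w + (k : ℕ) - 2 * w = (k : ℕ) := by omega
  simp only [phiF, h1, dif_neg, h2, dif_pos, hk, Fin.eta]
  simp

lemma phiF_at_last (k : Fin b) (h : 2 * w + a + (k : ℕ) < n) (v : Fin q) :
    phiF n q w a b hnn s t p r ms E S ⟨2 * w + a + (k : ℕ), h⟩ v
      = (if k ∈ S then (if v = ms k then (1:ℝ) else 0) - 1 / (q:ℝ) else 1 / (q:ℝ)) := by
  have h1 : ¬((2 * w + a + (k : ℕ)) < 2 * w) := by omega
  have h2 : ¬((2 * w + a + (k : ℕ)) < 2 * w + a) := by omega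
  have hk : 2 * w + a + (k : ℕ) - 2 * w - a = (k : ℕ) := by omega
  simp only [phiF, h1, dif_neg, h2, hk, Fin.eta]
  simp

end phiEval

@[to_additive]
lemma prod_fin_split {M : Type*} [CommMonoid M] {n w a b : ℕ} (hnn : n = 2 * w + a + b)
    (F : Fin n → M) :
    ∏ m, F m
      = (∏ k : Fin w, F ⟨2 * (k : ℕ), by have := k.isLt; omega⟩
            * F ⟨2 * (k : ℕ) + 1, by have := k.isLt; omega⟩)
        * (∏ k : Fin a, F ⟨2 * w + (k : ℕ), by have := k.isLt; omega⟩)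
        * ∏ k : Fin b, F ⟨2 * w + a + (k : ℕ), by have := k.isLt; omega⟩ := by
  classical
  set G : ℕ → M := fun m => if h : m < n then F ⟨m, h⟩ else 1 with hG
  have h1 : ∏ m, F m = ∏ m ∈ Finset.range n, G m := by
    rw [← Fin.prod_univ_eq_prod_range]
    exact Finset.prod_congr rfl fun m _ => by rw [hG]; simp [m.isLt]
  rw [h1]
  rw [show Finset.range n = Finset.range (2 * w + a + b) by rw [hnn]]
  rw [prod_split]
  congr 1
  · congr 1
    · rw [← Fin.prod_univ_eq_prod_range (fun k => G (2 * k) * G (2 * k + 1)) w]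
      refine Finset.prod_congr rfl fun k _ => ?_
      have e1 : 2 * (k : ℕ) < n := by have := k.isLt; omega
      have e2 : 2 * (k : ℕ) + 1 < n := by have := k.isLt; omega
      rw [hG]; simp only [e1, e2, dif_pos]
    · rw [← Fin.prod_univ_eq_prod_range (fun k => G (2 * w + k)) a]
      refine Finset.prod_congr rfl fun k _ => ?_
      have e1 : 2 * w + (k : ℕ) < n := by have := k.isLt; omega
      rw [hG]; simp only [e1, dif_pos]
  · rw [← Fin.prod_univ_eq_prod_range (fun k => G (2 * w + a + k)) b]
    refine Finset.prod_congr rfl fun k _ => ?_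
    have e1 : 2 * w + a + (k : ℕ) < n := by have := k.isLt; omega
    rw [hG]; simp only [e1, dif_pos]

open Classical in
/-- The set of "mean-zero" coordinates for `phiF E S`. -/
noncomputable def lvlT (n w a b : ℕ) (hnn : n = 2 * w + a + b)
    (E : Finset (Fin w)) (S : Finset (Fin b)) : Finset (Fin n) :=
  Finset.univ.filter fun m =>
    if h1 : (m : ℕ) < 2 * w then
      (if (m : ℕ) % 2 = 0 then (⟨(m : ℕ) / 2, by omega⟩ : Fin w) ∈ E
        else (⟨(m : ℕ) / 2, by omega⟩ : Fin w) ∉ E)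
    else if h2 : (m : ℕ) < 2 * w + a then True
    else (⟨(m : ℕ) - 2 * w - a, by have := m.isLt; omega⟩ : Fin b) ∈ S

section props

variable {n q w a b : ℕ} (hnn : n = 2 * w + a + b) {s t : Fin w → Fin q}
    {p r : Fin a → Fin q} {ms : Fin b → Fin q} (E : Finset (Fin w)) (S : Finset (Fin b))

lemma sum_indicator (s0 : Fin q) : ∑ v : Fin q, (if v = s0 then (1 : ℝ) else 0) = 1 := by
  rw [Finset.sum_ite_eq' Finset.univ s0 (fun _ => (1 : ℝ))]
  simp

lemma sum_ebar (hq : (q : ℝ) ≠ 0) (s0 : Fin q) :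
    ∑ v : Fin q, ((if v = s0 then (1 : ℝ) else 0) - 1 / q) = 0 := by
  rw [Finset.sum_sub_distrib, sum_indicator, Finset.sum_const, Finset.card_univ,
    Fintype.card_fin, nsmul_eq_mul]
  field_simp
  ring

lemma mem_lvlT_even (k : Fin w) (h : 2 * (k : ℕ) < n) :
    ((⟨2 * (k : ℕ), h⟩ : Fin n) ∈ lvlT n w a b hnn E S) ↔ k ∈ E := by
  have hlt : (2 * (k : ℕ)) < 2 * w := by have := k.isLt; omega
  have hk : (2 * (k : ℕ)) / 2 = (k : ℕ) := by omega
  simp only [lvlT, Finset.mem_filter, Finset.mem_univ, true_and, hlt, dif_pos,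
    Nat.mul_mod_right, if_pos, hk, Fin.eta]

lemma mem_lvlT_odd (k : Fin w) (h : 2 * (k : ℕ) + 1 < n) :
    ((⟨2 * (k : ℕ) + 1, h⟩ : Fin n) ∈ lvlT n w a b hnn E S) ↔ k ∉ E := by
  have hlt : (2 * (k : ℕ) + 1) < 2 * w := by have := k.isLt; omega
  have hmod : ¬((2 * (k : ℕ) + 1) % 2 = 0) := by omega
  have hk : (2 * (k : ℕ) + 1) / 2 = (k : ℕ) := by omega
  simp only [lvlT, Finset.mem_filter, Finset.mem_univ, true_and, hlt, dif_pos,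
    hmod, if_false, hk, Fin.eta]

lemma mem_lvlT_mid (k : Fin a) (h : 2 * w + (k : ℕ) < n) :
    ((⟨2 * w + (k : ℕ), h⟩ : Fin n) ∈ lvlT n w a b hnn E S) := by
  have h1 : ¬((2 * w + (k : ℕ)) < 2 * w) := by omega
  have h2 : (2 * w + (k : ℕ)) < 2 * w + a := by have := k.isLt; omega
  simp only [lvlT, Finset.mem_filter, Finset.mem_univ, true_and, h1, dif_neg, h2, dif_pos]
  simp

lemma mem_lvlT_last (k : Fin b) (h : 2 * w + a + (k : ℕ) < n) :
    ((⟨2 * w + a + (k : ℕ), h⟩ : Fin n) ∈ lvlT n w a b hnn E S) ↔ k ∈ S := by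
  have h1 : ¬((2 * w + a + (k : ℕ)) < 2 * w) := by omega
  have h2 : ¬((2 * w + a + (k : ℕ)) < 2 * w + a) := by omega
  have hk : 2 * w + a + (k : ℕ) - 2 * w - a = (k : ℕ) := by omega
  simp only [lvlT, Finset.mem_filter, Finset.mem_univ, true_and, h1, dif_neg, h2, hk, Fin.eta]
  simp

lemma lvlT_card : (lvlT n w a b hnn E S).card = w + a + S.card := by
  classical
  have hcard : (lvlT n w a b hnn E S).card
      = ∑ m : Fin n, if m ∈ lvlT n w a b hnn E S then (1 : ℕ) else 0 := by
    rw [Finset.sum_ite_mem, Finset.univ_inter, Finset.sum_const, smul_eq_mul, mul_one]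
  rw [hcard, sum_fin_split hnn]
  congr 1
  · congr 1
    · have : ∀ k : Fin w,
          ((if (⟨2 * (k : ℕ), by have := k.isLt; omega⟩ : Fin n) ∈ lvlT n w a b hnn E S
              then (1:ℕ) else 0)
            + (if (⟨2 * (k : ℕ) + 1, by have := k.isLt; omega⟩ : Fin n) ∈ lvlT n w a b hnn E S
              then (1:ℕ) else 0)) = 1 := by
        intro k
        simp only [mem_lvlT_even hnn E S, mem_lvlT_odd hnn E S]
        by_cases hk : k ∈ E <;> simp [hk]
      rw [Finset.sum_congr rfl fun k _ => this k]
      simp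
    · have : ∀ k : Fin a,
          (if (⟨2 * w + (k : ℕ), by have := k.isLt; omega⟩ : Fin n) ∈ lvlT n w a b hnn E S
            then (1:ℕ) else 0) = 1 := by
        intro k
        rw [if_pos (mem_lvlT_mid hnn E S k _)]
      rw [Finset.sum_congr rfl fun k _ => this k]
      simp
  · have : ∀ k : Fin b,
        (if (⟨2 * w + a + (k : ℕ), by have := k.isLt; omega⟩ : Fin n) ∈ lvlT n w a b hnn E S
          then (1:ℕ) else 0) = (if k ∈ S then 1 else 0) := by
      intro k
      simp only [mem_lvlT_last hnn E S]
    rw [Finset.sum_congr rfl fun k _ => this k]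
    simp [Finset.sum_ite_mem]

include hnn in
lemma fin_shape_cases (motive : Fin n → Prop)
    (h1 : ∀ (k : Fin w) (h : 2 * (k : ℕ) < n), motive ⟨2 * (k : ℕ), h⟩)
    (h2 : ∀ (k : Fin w) (h : 2 * (k : ℕ) + 1 < n), motive ⟨2 * (k : ℕ) + 1, h⟩)
    (h3 : ∀ (k : Fin a) (h : 2 * w + (k : ℕ) < n), motive ⟨2 * w + (k : ℕ), h⟩)
    (h4 : ∀ (k : Fin b) (h : 2 * w + a + (k : ℕ) < n), motive ⟨2 * w + a + (k : ℕ), h⟩)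
    (m : Fin n) : motive m := by
  rcases m with ⟨mv, hmv⟩
  by_cases c1 : mv < 2 * w
  · by_cases c2 : mv % 2 = 0
    · have e : (⟨mv, hmv⟩ : Fin n)
          = ⟨2 * ((⟨mv / 2, by omega⟩ : Fin w) : ℕ), by simp; omega⟩ := by
        apply Fin.ext; simp; omega
      rw [e]; exact h1 _ _
    · have e : (⟨mv, hmv⟩ : Fin n)
          = ⟨2 * ((⟨mv / 2, by omega⟩ : Fin w) : ℕ) + 1, by simp; omega⟩ := by
        apply Fin.ext; simp; omega
      rw [e]; exact h2 _ _
  · by_cases c3 : mv < 2 * w + a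
    · have e : (⟨mv, hmv⟩ : Fin n)
          = ⟨2 * w + ((⟨mv - 2 * w, by omega⟩ : Fin a) : ℕ), by simp; omega⟩ := by
        apply Fin.ext; simp; omega
      rw [e]; exact h3 _ _
    · have e : (⟨mv, hmv⟩ : Fin n)
          = ⟨2 * w + a + ((⟨mv - 2 * w - a, by omega⟩ : Fin b) : ℕ), by simp; omega⟩ := by
        apply Fin.ext; simp; omega
      rw [e]; exact h4 _ _

lemma phiF_sum_zero (hq : (q : ℝ) ≠ 0) :
    ∀ m ∈ lvlT n w a b hnn E S, ∑ v, phiF n q w a b hnn s t p r ms E S m v = 0 := by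
  intro m
  refine fin_shape_cases hnn
    (fun m => m ∈ lvlT n w a b hnn E S → ∑ v, phiF n q w a b hnn s t p r ms E S m v = 0)
    ?_ ?_ ?_ ?_ m
  · intro k h hm
    rw [mem_lvlT_even] at hm
    rw [Finset.sum_congr rfl fun v _ => phiF_at_even hnn s t p r ms E S k h v]
    rw [Finset.sum_congr rfl fun v _ => if_pos hm]
    exact sum_ebar hq (s k)
  · intro k h hm
    rw [mem_lvlT_odd] at hm
    rw [Finset.sum_congr rfl fun v _ => phiF_at_odd hnn s t p r ms E S k h v]
    rw [Finset.sum_congr rfl fun v _ => if_neg hm]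
    rw [Finset.sum_neg_distrib, sum_ebar hq (t k)]
    simp
  · intro k h _
    rw [Finset.sum_congr rfl fun v _ => phiF_at_mid hnn s t p r ms E S k h v]
    rw [Finset.sum_sub_distrib, sum_indicator, sum_indicator]
    ring
  · intro k h hm
    rw [mem_lvlT_last] at hm
    rw [Finset.sum_congr rfl fun v _ => phiF_at_last hnn s t p r ms E S k h v]
    rw [Finset.sum_congr rfl fun v _ => if_pos hm]
    exact sum_ebar hq (ms k)

lemma phiF_const :
    ∀ m ∉ lvlT n w a b hnn E S, ∀ v u,
      phiF n q w a b hnn s t p r ms E S m v = phiF n q w a b hnn s t p r ms E S m u := by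
  intro m
  refine fin_shape_cases hnn
    (fun m => m ∉ lvlT n w a b hnn E S → ∀ v u,
      phiF n q w a b hnn s t p r ms E S m v = phiF n q w a b hnn s t p r ms E S m u)
    ?_ ?_ ?_ ?_ m
  · intro k h hm v u
    rw [mem_lvlT_even] at hm
    rw [phiF_at_even hnn s t p r ms E S k h v, phiF_at_even hnn s t p r ms E S k h u,
      if_neg hm, if_neg hm]
  · intro k h hm v u
    rw [mem_lvlT_odd] at hm
    push_neg at hm
    rw [phiF_at_odd hnn s t p r ms E S k h v, phiF_at_odd hnn s t p r ms E S k h u,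
      if_pos hm, if_pos hm]
  · intro k h hm
    exact absurd (mem_lvlT_mid hnn E S k h) hm
  · intro k h hm v u
    rw [mem_lvlT_last] at hm
    rw [phiF_at_last hnn s t p r ms E S k h v, phiF_at_last hnn s t p r ms E S k h u,
      if_neg hm, if_neg hm]

end props

lemma memU_smul {n q t : ℕ} {f : (Fin n → Fin q) → ℝ} (c : ℝ) (hf : memU n q t f) :
    memU n q t (fun x => c * f x) := by
  intro x
  have : adjSum n q (fun x => c * f x) x = c * adjSum n q f x := by
    rw [adjSum, adjSum, Finset.mul_sum]
    refine Finset.sum_congr rfl fun y _ => ?_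
    split <;> simp
  rw [this, hf x]
  ring

/-- Splitting the coordinates into pairs / mid / last blocks. -/
def splitEquiv (n q w a b : ℕ) (hnn : n = 2 * w + a + b) :
    (Fin n → Fin q) ≃ ((Fin w → Fin q × Fin q) × (Fin a → Fin q) × (Fin b → Fin q)) where
  toFun x :=
    (fun k => (x ⟨2 * (k : ℕ), by have := k.isLt; omega⟩,
        x ⟨2 * (k : ℕ) + 1, by have := k.isLt; omega⟩),
      fun k => x ⟨2 * w + (k : ℕ), by have := k.isLt; omega⟩,
      fun k => x ⟨2 * w + a + (k : ℕ), by have := k.isLt; omega⟩)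
  invFun y m :=
    if h1 : (m : ℕ) < 2 * w then
      (if (m : ℕ) % 2 = 0 then (y.1 ⟨(m : ℕ) / 2, by omega⟩).1 else (y.1 ⟨(m : ℕ) / 2, by omega⟩).2)
    else if h2 : (m : ℕ) < 2 * w + a then y.2.1 ⟨(m : ℕ) - 2 * w, by omega⟩
    else y.2.2 ⟨(m : ℕ) - 2 * w - a, by have := m.isLt; omega⟩
  left_inv x := by
    funext m
    refine fin_shape_cases hnn (w := w) (a := a) (b := b)
      (fun m => (if h1 : (m : ℕ) < 2 * w then
          (if (m : ℕ) % 2 = 0 then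
            (x ⟨2 * (((⟨(m : ℕ) / 2, by omega⟩ : Fin w)) : ℕ), by have : (m:ℕ) < n := m.isLt; omega⟩)
            else (x ⟨2 * (((⟨(m : ℕ) / 2, by omega⟩ : Fin w)) : ℕ) + 1, by have : (m:ℕ) < n := m.isLt; omega⟩))
        else if h2 : (m : ℕ) < 2 * w + a then
          x ⟨2 * w + (((⟨(m : ℕ) - 2 * w, by omega⟩ : Fin a)) : ℕ), by have : (m:ℕ) < n := m.isLt; omega⟩
        else x ⟨2 * w + a + (((⟨(m : ℕ) - 2 * w - a, by have := m.isLt; omega⟩ : Fin b)) : ℕ), by have : (m:ℕ) < n := m.isLt; omega⟩) = x m)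
      ?_ ?_ ?_ ?_ m
    · intro k h
      have hlt : 2 * (k : ℕ) < 2 * w := by have := k.isLt; omega
      have hk : (2 * (k : ℕ)) / 2 = (k : ℕ) := by omega
      simp only [hlt, dif_pos, Nat.mul_mod_right, if_pos, hk]
    · intro k h
      have hlt : 2 * (k : ℕ) + 1 < 2 * w := by have := k.isLt; omega
      have hmod : ¬((2 * (k : ℕ) + 1) % 2 = 0) := by omega
      have hk : (2 * (k : ℕ) + 1) / 2 = (k : ℕ) := by omega
      simp only [hlt, dif_pos, hmod, if_false, hk]
    · intro k h
      have h1 : ¬(2 * w + (k : ℕ) < 2 * w) := by omega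
      have h2 : 2 * w + (k : ℕ) < 2 * w + a := by have := k.isLt; omega
      have hk : 2 * w + (k : ℕ) - 2 * w = (k : ℕ) := by omega
      simp only [h1, dif_neg, h2, dif_pos, hk]
      simp
    · intro k h
      have h1 : ¬(2 * w + a + (k : ℕ) < 2 * w) := by omega
      have h2 : ¬(2 * w + a + (k : ℕ) < 2 * w + a) := by omega
      have hk : 2 * w + a + (k : ℕ) - 2 * w - a = (k : ℕ) := by omega
      simp only [h1, dif_neg, h2, hk]
      simp
  right_inv y := by
    refine Prod.ext ?_ (Prod.ext ?_ ?_)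
    · funext k
      have hlt : 2 * (k : ℕ) < 2 * w := by have := k.isLt; omega
      have hlt1 : 2 * (k : ℕ) + 1 < 2 * w := by have := k.isLt; omega
      have hmod : ¬((2 * (k : ℕ) + 1) % 2 = 0) := by omega
      have hk : (2 * (k : ℕ)) / 2 = (k : ℕ) := by omega
      have hk1 : (2 * (k : ℕ) + 1) / 2 = (k : ℕ) := by omega
      simp only [hlt, hlt1, dif_pos, Nat.mul_mod_right, if_pos, hmod, if_false, hk, hk1, Fin.eta]
    · funext k
      have h1 : ¬(2 * w + (k : ℕ) < 2 * w) := by omega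
      have h2 : 2 * w + (k : ℕ) < 2 * w + a := by have := k.isLt; omega
      have hk : 2 * w + (k : ℕ) - 2 * w = (k : ℕ) := by omega
      simp only [h1, dif_neg, h2, dif_pos, hk, Fin.eta]
      simp
    · funext k
      have h1 : ¬(2 * w + a + (k : ℕ) < 2 * w) := by omega
      have h2 : ¬(2 * w + a + (k : ℕ) < 2 * w + a) := by omega
      have hk : 2 * w + a + (k : ℕ) - 2 * w - a = (k : ℕ) := by omega
      simp only [h1, dif_neg, h2, hk, Fin.eta]
      simp

lemma card_eq_indicator {q : ℕ} (m0 : Fin q) : Nat.card {v : Fin q // v = m0} = 1 := by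
  simp [Nat.card_eq_fintype_card, Fintype.card_subtype, Finset.filter_eq' Finset.univ m0]

lemma card_two_indicator {q : ℕ} (p0 r0 : Fin q) (h : p0 ≠ r0) :
    Nat.card {v : Fin q // v = p0 ∨ v = r0} = 2 := by
  rw [Nat.card_eq_fintype_card, Fintype.card_subtype]
  have : (Finset.univ.filter fun v : Fin q => v = p0 ∨ v = r0) = {p0, r0} := by
    ext v; simp
  rw [this, Finset.card_insert_of_notMem (by simp [h]), Finset.card_singleton]

lemma card_pair_block {q : ℕ} (s0 t0 : Fin q) :
    Nat.card {uv : Fin q × Fin q //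
      (uv.1 = s0 ∧ uv.2 ≠ t0) ∨ (uv.2 = t0 ∧ uv.1 ≠ s0)} = 2 * (q - 1) := by
  rw [Nat.card_eq_fintype_card, Fintype.card_subtype, Finset.filter_or]
  have hdisj : Disjoint
      (Finset.filter (fun uv : Fin q × Fin q => uv.1 = s0 ∧ uv.2 ≠ t0) Finset.univ)
      (Finset.filter (fun uv : Fin q × Fin q => uv.2 = t0 ∧ uv.1 ≠ s0) Finset.univ) := by
    rw [Finset.disjoint_left]
    rintro ⟨u, v⟩ h1 h2
    simp only [Finset.mem_filter, Finset.mem_univ, true_and] at h1 h2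
    exact h1.2 h2.1
  rw [Finset.card_union_of_disjoint hdisj]
  have huniv : (Finset.univ : Finset (Fin q × Fin q)) = Finset.univ ×ˢ Finset.univ := by
    rw [Finset.univ_product_univ]
  have h1 : (Finset.filter (fun uv : Fin q × Fin q => uv.1 = s0 ∧ uv.2 ≠ t0)
      Finset.univ).card = q - 1 := by
    rw [huniv, Finset.filter_product (fun u => u = s0) (fun v => v ≠ t0),
      Finset.card_product, Finset.filter_eq' Finset.univ s0,
      Finset.filter_ne' Finset.univ t0, Finset.card_erase_of_mem (Finset.mem_univ t0)]
    simp
  have hcong : Finset.filter (fun uv : Fin q × Fin q => uv.2 = t0 ∧ uv.1 ≠ s0) Finset.univ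
      = Finset.filter (fun uv : Fin q × Fin q => uv.1 ≠ s0 ∧ uv.2 = t0) Finset.univ := by
    apply Finset.filter_congr
    intro uv _
    exact and_comm
  have h2 : (Finset.filter (fun uv : Fin q × Fin q => uv.2 = t0 ∧ uv.1 ≠ s0)
      Finset.univ).card = q - 1 := by
    rw [hcong, huniv, Finset.filter_product (fun u => u ≠ s0) (fun v => v = t0),
      Finset.card_product, Finset.filter_eq' Finset.univ t0,
      Finset.filter_ne' Finset.univ s0, Finset.card_erase_of_mem (Finset.mem_univ s0)]
    simp
  rw [h1, h2]
  omega

section expand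

variable {n q i j : ℕ} (hij : i ≤ j) (hjn : j ≤ n) (hn : n < i + j)

/-- helper: product over a subset and its complement as a product of ite. -/
lemma prod_subset_ite {κ : Type*} [Fintype κ] [DecidableEq κ] (A B : κ → ℝ) (E : Finset κ) :
    (∏ k ∈ E, A k) * ∏ k ∈ Finset.univ \ E, B k = ∏ k, (if k ∈ E then A k else B k) := by
  rw [Finset.prod_ite]
  congr 1
  · congr 1; ext k; simp
  · congr 1; ext k; simp

include hij hjn hn in
lemma expand_f (hq : 2 ≤ q) (c : ℝ) (s t : Fin (n - j) → Fin q)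
    (p r : Fin (i + j - n) → Fin q) (hpr : ∀ k, p k ≠ r k) (ms : Fin (j - i) → Fin q)
    (hnn : n = 2 * (n - j) + (i + j - n) + (j - i)) :
    (fun x : Fin n → Fin q => c *
      (∏ k : Fin (n - j),
        (if x ⟨2 * (k : ℕ), by have := k.isLt; omega⟩ = s k ∧
              x ⟨2 * (k : ℕ) + 1, by have := k.isLt; omega⟩ ≠ t k then (1 : ℝ)
          else if x ⟨2 * (k : ℕ) + 1, by have := k.isLt; omega⟩ = t k ∧
              x ⟨2 * (k : ℕ), by have := k.isLt; omega⟩ ≠ s k then -1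
          else 0)) *
      (∏ k : Fin (i + j - n),
        (if x ⟨2 * (n - j) + (k : ℕ), by have := k.isLt; omega⟩ = p k then (1 : ℝ)
          else if x ⟨2 * (n - j) + (k : ℕ), by have := k.isLt; omega⟩ = r k then -1
          else 0)) *
      (∏ k : Fin (j - i),
        (if x ⟨2 * (n - j) + (i + j - n) + (k : ℕ), by have := k.isLt; omega⟩ = ms k
          then (1 : ℝ) else 0)))
    = ∑ E ∈ (Finset.univ : Finset (Fin (n - j))).powerset,
        ∑ S ∈ (Finset.univ : Finset (Fin (j - i))).powerset,
          (fun x => c * ∏ m, phiF n q (n - j) (i + j - n) (j - i) hnn s t p r ms E S m (x m)) := by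
  have hqR : (q : ℝ) ≠ 0 := Nat.cast_ne_zero.mpr (by omega)
  funext x
  simp only [Finset.sum_apply]
  -- abbreviations
  set A : Fin (n - j) → ℝ := fun k =>
    ((if x ⟨2 * (k : ℕ), by have := k.isLt; omega⟩ = s k then (1 : ℝ) else 0) - 1 / q) with hA
  set B : Fin (n - j) → ℝ := fun k =>
    -((if x ⟨2 * (k : ℕ) + 1, by have := k.isLt; omega⟩ = t k then (1 : ℝ) else 0) - 1 / q)
    with hB
  set D : Fin (j - i) → ℝ := fun k =>
    ((if x ⟨2 * (n - j) + (i + j - n) + (k : ℕ), by have := k.isLt; omega⟩ = ms k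
      then (1 : ℝ) else 0) - 1 / q) with hD
  -- block identities
  have hGk : ∀ k : Fin (n - j),
      (if x ⟨2 * (k : ℕ), by have := k.isLt; omega⟩ = s k ∧
            x ⟨2 * (k : ℕ) + 1, by have := k.isLt; omega⟩ ≠ t k then (1 : ℝ)
        else if x ⟨2 * (k : ℕ) + 1, by have := k.isLt; omega⟩ = t k ∧
            x ⟨2 * (k : ℕ), by have := k.isLt; omega⟩ ≠ s k then -1
        else 0) = A k + B k := by
    intro k
    rw [hA, hB]
    by_cases h1 : x ⟨2 * (k : ℕ), by have := k.isLt; omega⟩ = s k <;>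
      by_cases h2 : x ⟨2 * (k : ℕ) + 1, by have := k.isLt; omega⟩ = t k <;>
      simp [h1, h2] <;> ring
  have hHk : ∀ k : Fin (i + j - n),
      (if x ⟨2 * (n - j) + (k : ℕ), by have := k.isLt; omega⟩ = p k then (1 : ℝ)
        else if x ⟨2 * (n - j) + (k : ℕ), by have := k.isLt; omega⟩ = r k then -1
        else 0)
      = (if x ⟨2 * (n - j) + (k : ℕ), by have := k.isLt; omega⟩ = p k then (1 : ℝ) else 0)
        - (if x ⟨2 * (n - j) + (k : ℕ), by have := k.isLt; omega⟩ = r k then (1 : ℝ) else 0) := by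
    intro k
    by_cases h1 : x ⟨2 * (n - j) + (k : ℕ), by have := k.isLt; omega⟩ = p k <;>
      by_cases h2 : x ⟨2 * (n - j) + (k : ℕ), by have := k.isLt; omega⟩ = r k
    · exact absurd (h1.symm.trans h2) (hpr k)
    · simp [h1, h2, hpr k, Ne.symm (hpr k)]
    · simp [h1, h2, hpr k, Ne.symm (hpr k)]
    · simp [h1, h2]
  have hVk : ∀ k : Fin (j - i),
      (if x ⟨2 * (n - j) + (i + j - n) + (k : ℕ), by have := k.isLt; omega⟩ = ms k
        then (1 : ℝ) else 0) = D k + 1 / q := by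
    intro k
    rw [hD]
    ring
  rw [Finset.prod_congr rfl fun k _ => hGk k, Finset.prod_congr rfl fun k _ => hHk k,
    Finset.prod_congr rfl fun k _ => hVk k]
  rw [Finset.prod_add A B, Finset.prod_add D (fun _ => 1 / q)]
  -- push sums out
  rw [Finset.mul_sum, Finset.sum_comm]
  refine Finset.sum_congr rfl fun S hS => ?_
  rw [Finset.mul_sum, Finset.sum_mul, Finset.sum_mul]
  refine Finset.sum_congr rfl fun E hE => ?_
  -- identify the (E, S) term with the phiF product
  have key : (∏ m, phiF n q (n - j) (i + j - n) (j - i) hnn s t p r ms E S m (x m))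
      = (∏ k, (if k ∈ E then A k else B k))
        * (∏ k : Fin (i + j - n),
            ((if x ⟨2 * (n - j) + (k : ℕ), by have := k.isLt; omega⟩ = p k then (1 : ℝ) else 0)
            - (if x ⟨2 * (n - j) + (k : ℕ), by have := k.isLt; omega⟩ = r k then (1 : ℝ) else 0)))
        * (∏ k, (if k ∈ S then D k else 1 / q)) := by
    rw [prod_fin_split hnn (fun m => phiF n q (n - j) (i + j - n) (j - i) hnn s t p r ms E S m (x m))]
    congr 1
    · congr 1
      · refine Finset.prod_congr rfl fun k _ => ?_
        rw [phiF_at_even hnn s t p r ms E S k (by have := k.isLt; omega),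
          phiF_at_odd hnn s t p r ms E S k (by have := k.isLt; omega)]
        by_cases hk : k ∈ E
        · simp only [if_pos hk, mul_one, hA]
        · simp only [if_neg hk, one_mul, hB]
      · refine Finset.prod_congr rfl fun k _ => ?_
        rw [phiF_at_mid hnn s t p r ms E S k (by have := k.isLt; omega)]
    · refine Finset.prod_congr rfl fun k _ => ?_
      rw [phiF_at_last hnn s t p r ms E S k (by have := k.isLt; omega)]
  rw [key, prod_subset_ite A B E, prod_subset_ite D (fun _ => 1 / q) S]
  ring
end expand

/-- for i+j > n, the tensor product of a nonzero constant c, n-j functions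
a₁(s_k,t_k) (on coordinate pairs), i+j-n functions a₂(p_k,r_k) with p_k ≠ r_k, and j-i
indicators a₄(m_k) lies in U_{[i,j]}(n,q) and has support of cardinality 2^i (q-1)^{n-j}. -/
theorem construction_F2 (n q i j : ℕ) (hij : i ≤ j) (hjn : j ≤ n) (hn : n < i + j)
    (c : ℝ) (hc : c ≠ 0) (s t : Fin (n - j) → Fin q)
    (p r : Fin (i + j - n) → Fin q) (hpr : ∀ k, p k ≠ r k)
    (ms : Fin (j - i) → Fin q)
    (f : (Fin n → Fin q) → ℝ)
    (hf : f = fun x => c *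
      (∏ k : Fin (n - j),
        (if x ⟨2 * (k : ℕ), by have := k.isLt; omega⟩ = s k ∧
              x ⟨2 * (k : ℕ) + 1, by have := k.isLt; omega⟩ ≠ t k then (1 : ℝ)
          else if x ⟨2 * (k : ℕ) + 1, by have := k.isLt; omega⟩ = t k ∧
              x ⟨2 * (k : ℕ), by have := k.isLt; omega⟩ ≠ s k then -1
          else 0)) *
      (∏ k : Fin (i + j - n),
        (if x ⟨2 * (n - j) + (k : ℕ), by have := k.isLt; omega⟩ = p k then (1 : ℝ)
          else if x ⟨2 * (n - j) + (k : ℕ), by have := k.isLt; omega⟩ = r k then -1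
          else 0)) *
      (∏ k : Fin (j - i),
        (if x ⟨2 * (n - j) + (i + j - n) + (k : ℕ), by have := k.isLt; omega⟩ = ms k
          then (1 : ℝ) else 0))) :
    memUI n q i j f ∧ suppCard n q f = 2 ^ i * (q - 1) ^ (n - j) := by
  have hq2 : 2 ≤ q := by
    have h1 := (p ⟨0, by omega⟩).isLt
    have h2 := (r ⟨0, by omega⟩).isLt
    by_contra hq
    exact hpr ⟨0, by omega⟩ (Fin.ext (by omega))
  have hnn : n = 2 * (n - j) + (i + j - n) + (j - i) := by omega
  have hqR : (q : ℝ) ≠ 0 := Nat.cast_ne_zero.mpr (by omega)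
  constructor
  · -- membership in U_{[i,j]}
    rw [hf, expand_f hij hjn hn hq2 c s t p r hpr ms hnn]
    refine memUI_sum hij _ _ fun E _ => memUI_sum hij _ _ fun S _ => ?_
    have hScard : S.card ≤ j - i := by
      have := Finset.card_le_univ S
      simpa using this
    refine memUI_of_memU (t := (lvlT n (n - j) (i + j - n) (j - i) hnn E S).card) ?_ ?_
    · rw [lvlT_card hnn E S, Finset.mem_Icc]
      omega
    · exact memU_smul c (eigen_tensor _ _ (phiF_sum_zero hnn E S hqR) (phiF_const hnn E S))
  · -- support cardinality
    have hiff : ∀ x : Fin n → Fin q, f x ≠ 0 ↔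
        ((fun y : (Fin (n - j) → Fin q × Fin q) × (Fin (i + j - n) → Fin q) ×
            (Fin (j - i) → Fin q) =>
          (∀ k : Fin (n - j), ((y.1 k).1 = s k ∧ (y.1 k).2 ≠ t k)
              ∨ ((y.1 k).2 = t k ∧ (y.1 k).1 ≠ s k))
            ∧ ((∀ k : Fin (i + j - n), y.2.1 k = p k ∨ y.2.1 k = r k)
              ∧ (∀ k : Fin (j - i), y.2.2 k = ms k)))
          (splitEquiv n q (n - j) (i + j - n) (j - i) hnn x)) := by
      intro x
      simp only [hf, splitEquiv, Equiv.coe_fn_mk]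
      constructor
      · intro hx
        have hG : (∏ k : Fin (n - j),
            (if x ⟨2 * (k : ℕ), by have := k.isLt; omega⟩ = s k ∧
                  x ⟨2 * (k : ℕ) + 1, by have := k.isLt; omega⟩ ≠ t k then (1 : ℝ)
              else if x ⟨2 * (k : ℕ) + 1, by have := k.isLt; omega⟩ = t k ∧
                  x ⟨2 * (k : ℕ), by have := k.isLt; omega⟩ ≠ s k then -1
              else 0)) ≠ 0 := by
          intro h0; apply hx; rw [h0]; ring
        have hH : (∏ k : Fin (i + j - n),
            (if x ⟨2 * (n - j) + (k : ℕ), by have := k.isLt; omega⟩ = p k then (1 : ℝ)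
              else if x ⟨2 * (n - j) + (k : ℕ), by have := k.isLt; omega⟩ = r k then -1
              else 0)) ≠ 0 := by
          intro h0; apply hx; rw [h0]; ring
        have hV : (∏ k : Fin (j - i),
            (if x ⟨2 * (n - j) + (i + j - n) + (k : ℕ), by have := k.isLt; omega⟩ = ms k
              then (1 : ℝ) else 0)) ≠ 0 := by
          intro h0; apply hx; rw [h0]; ring
        refine ⟨fun k => ?_, fun k => ?_, fun k => ?_⟩
        · have hk := Finset.prod_ne_zero_iff.mp hG k (Finset.mem_univ k)
          revert hk
          split_ifs with h1 h2
          · intro _; exact Or.inl h1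
          · intro _; exact Or.inr h2
          · intro hk; exact absurd rfl hk
        · have hk := Finset.prod_ne_zero_iff.mp hH k (Finset.mem_univ k)
          revert hk
          split_ifs with h1 h2
          · intro _; exact Or.inl h1
          · intro _; exact Or.inr h2
          · intro hk; exact absurd rfl hk
        · have hk := Finset.prod_ne_zero_iff.mp hV k (Finset.mem_univ k)
          revert hk
          split_ifs with h1
          · intro _; exact h1
          · intro hk; exact absurd rfl hk
      · rintro ⟨h1, h2, h3⟩
        refine mul_ne_zero (mul_ne_zero (mul_ne_zero hc ?_) ?_) ?_ <;>
          refine Finset.prod_ne_zero_iff.mpr fun k _ => ?_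
        · rcases h1 k with hk | hk
          · rw [if_pos hk]; norm_num
          · rw [if_neg (by intro hcon; exact hk.2 hcon.1), if_pos hk]; norm_num
        · rcases h2 k with hk | hk
          · rw [if_pos hk]; norm_num
          · by_cases hpk : x ⟨2 * (n - j) + (k : ℕ), by have := k.isLt; omega⟩ = p k
            · rw [if_pos hpk]; norm_num
            · rw [if_neg hpk, if_pos hk]; norm_num
        · rw [if_pos (h3 k)]; norm_num
    rw [suppCard]
    rw [Nat.card_congr (Equiv.subtypeEquiv
      (q := fun y : (Fin (n - j) → Fin q × Fin q) × (Fin (i + j - n) → Fin q) ×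
            (Fin (j - i) → Fin q) =>
          (∀ k : Fin (n - j), ((y.1 k).1 = s k ∧ (y.1 k).2 ≠ t k)
              ∨ ((y.1 k).2 = t k ∧ (y.1 k).1 ≠ s k))
            ∧ ((∀ k : Fin (i + j - n), y.2.1 k = p k ∨ y.2.1 k = r k)
              ∧ (∀ k : Fin (j - i), y.2.2 k = ms k)))
      (splitEquiv n q (n - j) (i + j - n) (j - i) hnn) hiff)]
    rw [Nat.card_congr (Equiv.subtypeProdEquivProd
      (p := fun g : Fin (n - j) → Fin q × Fin q =>
        ∀ k, ((g k).1 = s k ∧ (g k).2 ≠ t k) ∨ ((g k).2 = t k ∧ (g k).1 ≠ s k))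
      (q := fun z : (Fin (i + j - n) → Fin q) × (Fin (j - i) → Fin q) =>
        (∀ k, z.1 k = p k ∨ z.1 k = r k) ∧ (∀ k, z.2 k = ms k)))]
    rw [Nat.card_prod]
    rw [Nat.card_congr (Equiv.subtypeProdEquivProd
      (p := fun g : Fin (i + j - n) → Fin q => ∀ k, g k = p k ∨ g k = r k)
      (q := fun g : Fin (j - i) → Fin q => ∀ k, g k = ms k))]
    rw [Nat.card_prod]
    rw [Nat.card_congr (Equiv.subtypePiEquivPi
      (p := fun (k : Fin (n - j)) (uv : Fin q × Fin q) =>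
        (uv.1 = s k ∧ uv.2 ≠ t k) ∨ (uv.2 = t k ∧ uv.1 ≠ s k))),
      Nat.card_congr (Equiv.subtypePiEquivPi
        (p := fun (k : Fin (i + j - n)) (v : Fin q) => v = p k ∨ v = r k)),
      Nat.card_congr (Equiv.subtypePiEquivPi
        (p := fun (k : Fin (j - i)) (v : Fin q) => v = ms k))]
    rw [Nat.card_pi, Nat.card_pi, Nat.card_pi]
    rw [Finset.prod_congr rfl fun (k : Fin (n - j)) _ => card_pair_block (s k) (t k),
      Finset.prod_congr rfl fun (k : Fin (i + j - n)) _ => card_two_indicator (p k) (r k) (hpr k),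
      Finset.prod_congr rfl fun (k : Fin (j - i)) _ => card_eq_indicator (ms k)]
    rw [Finset.prod_const, Finset.prod_const, Finset.prod_const,
      Finset.card_univ, Finset.card_univ, Finset.card_univ,
      Fintype.card_fin, Fintype.card_fin, Fintype.card_fin]
    rw [one_pow, mul_one, mul_pow]
    have harr : 2 ^ (n - j) * (q - 1) ^ (n - j) * 2 ^ (i + j - n)
        = 2 ^ ((n - j) + (i + j - n)) * (q - 1) ^ (n - j) := by
      rw [pow_add]; ring
    rw [harr, show (n - j) + (i + j - n) = i from by omega]
end

section
/- The function g on Σ_q² defined by g(x,y) = 1 if x=y=0, g(x,y) = -1 if x=y=q-1, and g(x,y)=0 otherwise, lies in U_{[1,2]}(2,q) (the sum of the eigenspaces of H(2,q) for eigenvalues q-2 and -2), and its support has cardinality 2, which equals the minimum 2^1(q-1)^{2-2}. -/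
lemma pi_eq_matrix {q : ℕ} (x : Fin 2 → Fin q) : x = ![x 0, x 1] := by
  funext i; fin_cases i <;> rfl

lemma sum_pi_two {q : ℕ} (F : (Fin 2 → Fin q) → ℝ) :
    ∑ y : Fin 2 → Fin q, F y = ∑ s : Fin q, ∑ t : Fin q, F ![s, t] := by
  have h2 : ∑ p : Fin q × Fin q, F ![p.1, p.2] = ∑ s : Fin q, ∑ t : Fin q, F ![s, t] :=
    Fintype.sum_prod_type (fun p : Fin q × Fin q => F ![p.1, p.2])
  rw [← h2]
  exact Fintype.sum_equiv (piFinTwoEquiv fun _ => Fin q) _ _ fun y => by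
    congr 1; exact pi_eq_matrix y

lemma ham_two {q : ℕ} (x y : Fin 2 → Fin q) :
    hammingDist x y = (if y 0 = x 0 then 0 else 1) + (if y 1 = x 1 then 0 else 1) := by
  rw [hammingDist, Finset.card_filter, Fin.sum_univ_two]
  congr 1 <;> split <;> simp_all [eq_comm]

lemma sum_ite_ne {q : ℕ} (B : Fin q → ℝ) (c : Fin q) :
    ∑ s : Fin q, (if s = c then 0 else B s) = (∑ s : Fin q, B s) - B c := by
  have h : ∀ s : Fin q, (if s = c then 0 else B s) = B s - (if s = c then B s else 0) := by
    intro s; split <;> simp_all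
  rw [Finset.sum_congr rfl fun s _ => h s, Finset.sum_sub_distrib,
    Finset.sum_ite_eq' Finset.univ c B]
  simp

lemma adjSum_two {q : ℕ} (f : (Fin 2 → Fin q) → ℝ) (x : Fin 2 → Fin q) :
    adjSum 2 q f x =
      ((∑ s : Fin q, f ![s, x 1]) + ∑ t : Fin q, f ![x 0, t]) - 2 * f ![x 0, x 1] := by
  rw [adjSum, sum_pi_two (fun y => if hammingDist x y = 1 then f y else 0)]
  have key : ∀ s t : Fin q, (if hammingDist x ![s, t] = 1 then f ![s, t] else 0)
      = (if t = x 1 then (if s = x 0 then 0 else f ![s, t]) else 0)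
        + (if s = x 0 then (if t = x 1 then 0 else f ![s, t]) else 0) := by
    intro s t
    rw [ham_two]
    simp only [Matrix.cons_val_zero, Matrix.cons_val_one, Matrix.head_cons]
    by_cases h0 : s = x 0 <;> by_cases h1 : t = x 1 <;> simp [h0, h1]
  simp only [key, Finset.sum_add_distrib]
  have e1 : (∑ s : Fin q, ∑ t : Fin q,
      if t = x 1 then (if s = x 0 then 0 else f ![s, t]) else 0)
      = (∑ s : Fin q, f ![s, x 1]) - f ![x 0, x 1] := by
    have h : ∀ s : Fin q, (∑ t : Fin q,
        if t = x 1 then (if s = x 0 then 0 else f ![s, t]) else 0)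
        = if s = x 0 then 0 else f ![s, x 1] :=
      fun s => Finset.sum_ite_eq' Finset.univ (x 1) _ |>.trans (by simp)
    rw [Finset.sum_congr rfl fun s _ => h s, sum_ite_ne]
  have e2 : (∑ s : Fin q, ∑ t : Fin q,
      if s = x 0 then (if t = x 1 then 0 else f ![s, t]) else 0)
      = (∑ t : Fin q, f ![x 0, t]) - f ![x 0, x 1] := by
    rw [Finset.sum_comm]
    have h : ∀ t : Fin q, (∑ s : Fin q,
        if s = x 0 then (if t = x 1 then 0 else f ![s, t]) else 0)
        = if t = x 1 then 0 else f ![x 0, t] :=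
      fun t => Finset.sum_ite_eq' Finset.univ (x 0) _ |>.trans (by simp)
    rw [Finset.sum_congr rfl fun t _ => h t, sum_ite_ne]
  rw [e1, e2]; ring

lemma aux_main (q : ℕ) (hq : 2 ≤ q) (z0 z1 : Fin q)
    (hz0 : (z0 : ℕ) = 0) (hz1 : (z1 : ℕ) = q - 1)
    (g : (Fin 2 → Fin q) → ℝ)
    (hg : g = fun x =>
      if x 0 = z0 ∧ x 1 = z0 then (1 : ℝ)
      else if x 0 = z1 ∧ x 1 = z1 then -1
      else 0) :
    memUI 2 q 1 2 g ∧ suppCard 2 q g = 2 ∧ 2 = 2 ^ 1 * (q - 1) ^ (2 - 2) := by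
  have hq0 : (q : ℝ) ≠ 0 := Nat.cast_ne_zero.mpr (by omega)
  have hne : z0 ≠ z1 := fun h => by rw [h] at hz0; omega
  set a : Fin q → ℝ := fun z => (if z = z0 then 1 else 0) - (if z = z1 then 1 else 0) with ha
  set u : Fin q → ℝ := fun z => (if z = z0 then 1 else 0) - 1 / q with hu
  set v : Fin q → ℝ := fun z => (if z = z1 then 1 else 0) - 1 / q with hv
  have sum_ind : ∀ c : Fin q, ∑ z : Fin q, (if z = c then (1 : ℝ) else 0) = 1 := by
    intro c
    rw [Finset.sum_ite_eq' Finset.univ c (fun _ => (1 : ℝ))]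
    simp
  have suma : ∑ z : Fin q, a z = 0 := by
    rw [ha]
    rw [Finset.sum_sub_distrib, sum_ind, sum_ind]; ring
  have sumu : ∑ z : Fin q, u z = 0 := by
    rw [hu]
    rw [Finset.sum_sub_distrib, sum_ind, Finset.sum_const, Finset.card_univ, Fintype.card_fin,
      nsmul_eq_mul]
    field_simp
    ring
  have sumv : ∑ z : Fin q, v z = 0 := by
    rw [hv]
    rw [Finset.sum_sub_distrib, sum_ind, Finset.sum_const, Finset.card_univ, Fintype.card_fin,
      nsmul_eq_mul]
    field_simp
    ring
  set G1 : (Fin 2 → Fin q) → ℝ := fun x => (a (x 0) + a (x 1)) / q with hG1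
  set G2 : (Fin 2 → Fin q) → ℝ := fun x => u (x 0) * u (x 1) - v (x 0) * v (x 1) with hG2
  have hU1 : memU 2 q 1 G1 := by
    intro x
    rw [adjSum_two]
    have e1 : ∑ s : Fin q, G1 ![s, x 1] = a (x 1) := by
      calc ∑ s : Fin q, G1 ![s, x 1] = ∑ s : Fin q, (a s + a (x 1)) / q := by
            apply Finset.sum_congr rfl; intro s _; rw [hG1]; simp
        _ = ((∑ s : Fin q, a s) + q * a (x 1)) / q := by
            rw [← Finset.sum_div, Finset.sum_add_distrib, Finset.sum_const, Finset.card_univ,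
              Fintype.card_fin, nsmul_eq_mul]
        _ = a (x 1) := by rw [suma]; field_simp; ring
    have e2 : ∑ t : Fin q, G1 ![x 0, t] = a (x 0) := by
      calc ∑ t : Fin q, G1 ![x 0, t] = ∑ t : Fin q, (a (x 0) + a t) / q := by
            apply Finset.sum_congr rfl; intro t _; rw [hG1]; simp
        _ = (q * a (x 0) + ∑ t : Fin q, a t) / q := by
            rw [← Finset.sum_div, Finset.sum_add_distrib, Finset.sum_const, Finset.card_univ,
              Fintype.card_fin, nsmul_eq_mul]
        _ = a (x 0) := by rw [suma]; field_simp; ring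
    have e3 : G1 ![x 0, x 1] = (a (x 0) + a (x 1)) / q := by rw [hG1]; simp
    rw [e1, e2, e3, hG1]
    push_cast
    field_simp
    ring
  have hU2 : memU 2 q 2 G2 := by
    intro x
    rw [adjSum_two]
    have e1 : ∑ s : Fin q, G2 ![s, x 1] = 0 := by
      calc ∑ s : Fin q, G2 ![s, x 1] = ∑ s : Fin q, (u s * u (x 1) - v s * v (x 1)) := by
            apply Finset.sum_congr rfl; intro s _; rw [hG2]; simp
        _ = 0 := by
            rw [Finset.sum_sub_distrib, ← Finset.sum_mul, ← Finset.sum_mul, sumu, sumv]; ring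
    have e2 : ∑ t : Fin q, G2 ![x 0, t] = 0 := by
      calc ∑ t : Fin q, G2 ![x 0, t] = ∑ t : Fin q, (u (x 0) * u t - v (x 0) * v t) := by
            apply Finset.sum_congr rfl; intro t _; rw [hG2]; simp
        _ = 0 := by
            rw [Finset.sum_sub_distrib, ← Finset.mul_sum, ← Finset.mul_sum, sumu, sumv]; ring
    have e3 : G2 ![x 0, x 1] = u (x 0) * u (x 1) - v (x 0) * v (x 1) := by rw [hG2]; simp
    rw [e1, e2, e3, hG2]
    push_cast
    ring
  have hdecomp : g = fun x => G1 x + G2 x := by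
    funext x
    rw [hg, hG1, hG2, ha, hu, hv]
    simp only
    rcases eq_or_ne (x 0) z0 with h1 | h1 <;> rcases eq_or_ne (x 1) z0 with h2 | h2 <;>
      rcases eq_or_ne (x 0) z1 with h3 | h3 <;> rcases eq_or_ne (x 1) z1 with h4 | h4 <;>
      simp_all <;> field_simp <;> ring
  refine ⟨?_, ?_, by norm_num⟩
  · refine ⟨fun t => if t = 1 then G1 else if t = 2 then G2 else 0, ?_, ?_⟩
    · intro t ht
      simp only [Finset.mem_Icc] at ht
      obtain ⟨ht1, ht2⟩ := ht
      interval_cases t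
      · exact hU1
      · exact hU2
    · rw [show Finset.Icc 1 2 = ({1, 2} : Finset ℕ) by decide,
        Finset.sum_insert (by decide), Finset.sum_singleton]
      simpa using (hdecomp.trans rfl : g = G1 + G2)
  · have gval : ∀ x : Fin 2 → Fin q, g x ≠ 0 ↔ (x = ![z0, z0] ∨ x = ![z1, z1]) := by
      intro x
      have hx0 : x = ![z0, z0] ↔ (x 0 = z0 ∧ x 1 = z0) := by
        constructor
        · intro h; rw [h]; exact ⟨rfl, rfl⟩
        · rintro ⟨h1, h2⟩; rw [pi_eq_matrix x, h1, h2]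
      have hx1 : x = ![z1, z1] ↔ (x 0 = z1 ∧ x 1 = z1) := by
        constructor
        · intro h; rw [h]; exact ⟨rfl, rfl⟩
        · rintro ⟨h1, h2⟩; rw [pi_eq_matrix x, h1, h2]
      rw [hg, hx0, hx1]
      by_cases h1 : x 0 = z0 ∧ x 1 = z0 <;> by_cases h2 : x 0 = z1 ∧ x 1 = z1 <;>
        simp [h1, h2, hne, hne.symm]
    have hsupp : {x : Fin 2 → Fin q | g x ≠ 0} = {![z0, z0], ![z1, z1]} :=
      Set.ext fun x => (gval x).trans (by simp)
    have hnepair : (![z0, z0] : Fin 2 → Fin q) ≠ ![z1, z1] := by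
      intro h
      exact hne (by simpa using congrFun h 0)
    calc suppCard 2 q g = Nat.card {x : Fin 2 → Fin q | g x ≠ 0} := rfl
      _ = ({![z0, z0], ![z1, z1]} : Set (Fin 2 → Fin q)).ncard := by
          rw [hsupp, Nat.card_coe_set_eq]
      _ = 2 := Set.ncard_pair hnepair

/-- the function g with g(0,0)=1, g(q-1,q-1)=-1 and 0 elsewhere lies in
U_{[1,2]}(2,q) and its support has cardinality 2 = 2^1 (q-1)^{2-2}, the minimum. -/
theorem example_g_min_support (q : ℕ) (hq : 2 ≤ q)
    (g : (Fin 2 → Fin q) → ℝ)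
    (hg : g = fun x =>
      if x 0 = ⟨0, by omega⟩ ∧ x 1 = ⟨0, by omega⟩ then (1 : ℝ)
      else if x 0 = ⟨q - 1, by omega⟩ ∧ x 1 = ⟨q - 1, by omega⟩ then -1
      else 0) :
    memUI 2 q 1 2 g ∧ suppCard 2 q g = 2 ∧ 2 = 2 ^ 1 * (q - 1) ^ (2 - 2) := by
  exact aux_main q hq ⟨0, by omega⟩ ⟨q - 1, by omega⟩ rfl rfl g hg
end
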